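/- arXiv:1012.3833 — 5 statements merged into one kernel-verified Lean document; each statement's English description precedes it below -/
import Mathlib

section
/- Let p be an odd prime and x a rational p-integer with x not divisible by p and x+1 not divisible by p. Then P_{(p-1)/2}(x) \equiv \left(\frac{2(x+1)}{p}\right) P_{(p-1)/2}\left(\frac{3-x}{1+x}\right) \pmod{p}, where (\cdot/p) is the Legendre symbol and P_n is the Legendre polynomial. -/
open Finset Polynomial

/-- `a ≡ b (mod p^k)` as rationals: `a - b` is `p^k` times a `p`-integral rational. -/
def ratCongr (p k : ℕ) (a b : ℚ) : Prop :=
  ∃ c : ℚ, a - b = (p : ℚ) ^ k * c ∧ ¬ (p ∣ c.den)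

/-- The Legendre polynomial `P n`, defined via Rodrigues' formula. -/
noncomputable def legendre (n : ℕ) : Polynomial ℚ :=
  ((2 ^ n * n.factorial : ℚ)⁻¹) • ((fun q => Polynomial.derivative q)^[n] ((X ^ 2 - 1) ^ n))

/-- The Legendre symbol of a `p`-integral rational `x` modulo `p`
(for `x = m/n` it is `(mn/p)`, the symbol of the residue of `x` mod `p`). -/
def ratLegendreSym (p : ℕ) [Fact p.Prime] (x : ℚ) : ℤ :=
  legendreSym p (x.num * x.den)

namespace Stmt13Aux

/-! ### p-integrality lemmas -/

variable {p : ℕ}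

lemma pint_add (hp : p.Prime) {a b : ℚ} (ha : ¬ p ∣ a.den) (hb : ¬ p ∣ b.den) :
    ¬ p ∣ (a + b).den := by
  intro h
  rcases (hp.dvd_mul).1 (h.trans (Rat.add_den_dvd a b)) with h' | h' <;> tauto

lemma pint_mul (hp : p.Prime) {a b : ℚ} (ha : ¬ p ∣ a.den) (hb : ¬ p ∣ b.den) :
    ¬ p ∣ (a * b).den := by
  intro h
  rcases (hp.dvd_mul).1 (h.trans (Rat.mul_den_dvd a b)) with h' | h' <;> tauto

lemma pint_neg {a : ℚ} (ha : ¬ p ∣ a.den) : ¬ p ∣ (-a).den := by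
  rwa [Rat.neg_den]

lemma pint_sub (hp : p.Prime) {a b : ℚ} (ha : ¬ p ∣ a.den) (hb : ¬ p ∣ b.den) :
    ¬ p ∣ (a - b).den := by
  rw [sub_eq_add_neg]; exact pint_add hp ha (pint_neg hb)

lemma pint_of_den_one (hp : p.Prime) {q : ℚ} (h : q.den = 1) : ¬ p ∣ q.den := by
  rw [h, Nat.dvd_one]
  exact hp.one_lt.ne'

lemma pint_intCast (hp : p.Prime) (m : ℤ) : ¬ p ∣ ((m : ℚ)).den :=
  pint_of_den_one hp (Rat.den_intCast m)

lemma pint_natCast (hp : p.Prime) (m : ℕ) : ¬ p ∣ ((m : ℚ)).den := by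
  rw [show ((m : ℚ)) = ((m : ℤ) : ℚ) by push_cast; ring]
  exact pint_intCast hp m

lemma pint_one (hp : p.Prime) : ¬ p ∣ (1 : ℚ).den := pint_of_den_one hp rfl

lemma pint_pow (hp : p.Prime) {a : ℚ} (ha : ¬ p ∣ a.den) (k : ℕ) : ¬ p ∣ (a ^ k).den := by
  induction k with
  | zero => simpa using pint_one hp
  | succ k ih => rw [pow_succ]; exact pint_mul hp ih ha

lemma pint_sum (hp : p.Prime) {α : Type*} (s : Finset α) (f : α → ℚ)
    (h : ∀ i ∈ s, ¬ p ∣ (f i).den) : ¬ p ∣ (∑ i ∈ s, f i).den := by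
  refine Finset.sum_induction f (fun q => ¬ p ∣ q.den) (fun a b => pint_add hp) ?_ h
  exact pint_of_den_one hp rfl

lemma pint_div_int (hp : p.Prime) (a b : ℤ) (hb : ¬ (p : ℤ) ∣ b) :
    ¬ p ∣ (((a : ℚ) / (b : ℚ)).den) := by
  intro h
  apply hb
  have hd := Rat.den_dvd a b
  rw [Rat.divInt_eq_div] at hd
  exact dvd_trans (Int.natCast_dvd_natCast.2 h) hd

lemma not_pdvd_two (hp : p.Prime) (hodd : p ≠ 2) : ¬ (p : ℤ) ∣ 2 := by
  intro h
  have h3 : p ∣ 2 := by exact_mod_cast h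
  exact hodd ((Nat.prime_dvd_prime_iff_eq hp Nat.prime_two).1 h3)

/-- `2^n` inverse is `p`-integral for odd `p`. -/
lemma pint_inv_two_pow (hp : p.Prime) (hodd : p ≠ 2) (n : ℕ) :
    ¬ p ∣ (((2 : ℚ) ^ n)⁻¹).den := by
  have h : ((2 : ℚ) ^ n)⁻¹ = ((1 : ℤ) : ℚ) / (((2 ^ n : ℤ)) : ℚ) := by push_cast; rw [one_div]
  rw [h]
  apply pint_div_int hp
  intro hh
  have hpz : Prime ((p : ℤ)) := Nat.prime_iff_prime_int.mp hp
  exact not_pdvd_two hp hodd (hpz.dvd_of_dvd_pow hh)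

section Cast

variable [hp : Fact p.Prime]

lemma denK {q : ℚ} (h : ¬ p ∣ q.den) : ((q.den : ℕ) : ZMod p) ≠ 0 :=
  fun h0 => h ((ZMod.natCast_eq_zero_iff _ _).1 h0)

lemma numK {q : ℚ} (h : ¬ (p : ℤ) ∣ q.num) : ((q.num : ℤ) : ZMod p) ≠ 0 :=
  fun h0 => h ((ZMod.intCast_zmod_eq_zero_iff_dvd _ _).1 h0)

lemma castK_add {a b : ℚ} (ha : ¬ p ∣ a.den) (hb : ¬ p ∣ b.den) :
    ((a + b : ℚ) : ZMod p) = (a : ZMod p) + (b : ZMod p) :=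
  Rat.cast_add_of_ne_zero (denK ha) (denK hb)

lemma castK_mul {a b : ℚ} (ha : ¬ p ∣ a.den) (hb : ¬ p ∣ b.den) :
    ((a * b : ℚ) : ZMod p) = (a : ZMod p) * (b : ZMod p) :=
  Rat.cast_mul_of_ne_zero (denK ha) (denK hb)

lemma castK_sub {a b : ℚ} (ha : ¬ p ∣ a.den) (hb : ¬ p ∣ b.den) :
    ((a - b : ℚ) : ZMod p) = (a : ZMod p) - (b : ZMod p) :=
  Rat.cast_sub_of_ne_zero (denK ha) (denK hb)

lemma castK_div {a b : ℚ} (ha : ¬ p ∣ a.den) (hb : ¬ (p : ℤ) ∣ b.num) :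
    ((a / b : ℚ) : ZMod p) = (a : ZMod p) / (b : ZMod p) :=
  Rat.cast_div_of_ne_zero (denK ha) (numK hb)

lemma castK_pow {a : ℚ} (ha : ¬ p ∣ a.den) (k : ℕ) :
    ((a ^ k : ℚ) : ZMod p) = (a : ZMod p) ^ k := by
  induction k with
  | zero => simp
  | succ k ih =>
    rw [pow_succ, pow_succ, castK_mul (pint_pow hp.out ha k) ha, ih]

lemma castK_sum {α : Type*} (s : Finset α) (f : α → ℚ)
    (h : ∀ i ∈ s, ¬ p ∣ (f i).den) :
    ((∑ i ∈ s, f i : ℚ) : ZMod p) = ∑ i ∈ s, ((f i : ℚ) : ZMod p) := by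
  induction s using Finset.cons_induction with
  | empty => simp
  | cons a s ha ih =>
    rw [Finset.sum_cons, Finset.sum_cons,
      castK_add (h a (Finset.mem_cons_self a s))
        (pint_sum hp.out s f (fun i hi => h i (Finset.mem_cons_of_mem hi))),
      ih (fun i hi => h i (Finset.mem_cons_of_mem hi))]

/-- Key: equality of casts in `ZMod p` gives `ratCongr`. -/
lemma ratCongr_of_cast_eq {a b : ℚ} (ha : ¬ p ∣ a.den) (hb : ¬ p ∣ b.den)
    (h : ((a : ℚ) : ZMod p) = ((b : ℚ) : ZMod p)) : ratCongr p 1 a b := by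
  have hp0 : (p : ℚ) ≠ 0 := Nat.cast_ne_zero.mpr hp.out.ne_zero
  refine ⟨(a - b) / p, by field_simp, ?_⟩
  have hd : ¬ p ∣ (a - b).den := pint_sub hp.out ha hb
  have hcast0 : ((a - b : ℚ) : ZMod p) = 0 := by
    rw [castK_sub ha hb, h, sub_self]
  generalize hq : a - b = q at *
  have hdenK : ((q.den : ℕ) : ZMod p) ≠ 0 := denK hd
  have hnum : ((p : ℤ)) ∣ q.num := by
    rw [← ZMod.intCast_zmod_eq_zero_iff_dvd]
    rw [Rat.cast_def] at hcast0
    rcases div_eq_zero_iff.1 hcast0 with h' | h'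
    · exact h'
    · exact absurd h' hdenK
  obtain ⟨m, hm⟩ := hnum
  have hden0 : ((q.den : ℚ)) ≠ 0 := Nat.cast_ne_zero.mpr q.den_nz
  have hnumq : (q.num : ℚ) = q * q.den := (div_eq_iff hden0).mp (Rat.num_div_den q)
  have h2 : q / p = ((m : ℚ)) / ((q.den : ℚ)) := by
    rw [div_eq_div_iff hp0 hden0, ← hnumq, hm]
    push_cast
    ring
  rw [h2, show ((q.den : ℚ)) = (((q.den : ℤ)) : ℚ) by push_cast; ring]
  apply pint_div_int hp.out
  intro h3
  exact hd (Int.ofNat_dvd.mp h3)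

end Cast

/-! ### combinatorial lemmas -/

lemma triangle_sum {M : Type*} [AddCommMonoid M] (N : ℕ) (f : ℕ → ℕ → M) :
    ∑ k ∈ range (N + 1), ∑ j ∈ range (N + 1 - k), f k j
      = ∑ m ∈ range (N + 1), ∑ k ∈ range (m + 1), f k (m - k) := by
  rw [Finset.sum_sigma' (range (N + 1)) (fun k => range (N + 1 - k)) (fun k j => f k j),
      Finset.sum_sigma' (range (N + 1)) (fun m => range (m + 1)) (fun m k => f k (m - k))]
  refine Finset.sum_nbij' (fun a => ⟨a.1 + a.2, a.1⟩) (fun a => ⟨a.2, a.1 - a.2⟩) ?_ ?_ ?_ ?_ ?_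
  · rintro ⟨k, j⟩ h
    simp only [Finset.mem_sigma, Finset.mem_range] at *
    omega
  · rintro ⟨m, k⟩ h
    simp only [Finset.mem_sigma, Finset.mem_range] at *
    omega
  · rintro ⟨k, j⟩ h
    simp only [Finset.mem_sigma, Finset.mem_range] at h
    have hj : k + j - k = j := by omega
    exact congrArg (Sigma.mk k) hj
  · rintro ⟨m, k⟩ h
    simp only [Finset.mem_sigma, Finset.mem_range] at h
    have hm : k + (m - k) = m := by omega
    exact congrArg (fun z : ℕ => (Sigma.mk z k : Σ _ : ℕ, ℕ)) hm
  · rintro ⟨k, j⟩ h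
    simp

lemma inner_sum {n m : ℕ} (hm : m ≤ n) :
    ∑ k ∈ range (m + 1), (n.choose k) ^ 2 * (n - k).choose (m - k)
      = n.choose m * (n + m).choose m := by
  have step : ∀ k ∈ range (m + 1),
      (n.choose k) ^ 2 * (n - k).choose (m - k) = n.choose m * (m.choose k * n.choose k) := by
    intro k hk
    rw [mem_range] at hk
    have h := Nat.choose_mul (n := n) (by omega : k ≤ m)
    calc (n.choose k) ^ 2 * (n - k).choose (m - k)
        = n.choose k * (n.choose k * (n - k).choose (m - k)) := by ring
      _ = n.choose k * (n.choose m * m.choose k) := by rw [← h]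
      _ = n.choose m * (m.choose k * n.choose k) := by ring
  rw [Finset.sum_congr rfl step, ← Finset.mul_sum]
  congr 1
  rw [Nat.add_choose_eq n m m, Finset.Nat.sum_antidiagonal_eq_sum_range_succ_mk]
  apply Finset.sum_congr rfl
  intro k hk
  rw [mem_range] at hk
  rw [Nat.choose_symm (by omega : k ≤ m), mul_comm]

section Zmod

variable [hp : Fact p.Prime]

lemma two_n_add_one (hodd : p ≠ 2) : 2 * ((p - 1) / 2) + 1 = p := by
  have h2 : p % 2 = 1 := Nat.odd_iff.mp (hp.out.odd_of_ne_two hodd)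
  have := hp.out.two_le
  omega

lemma twoK_ne_zero (hodd : p ≠ 2) : (2 : ZMod p) ≠ 0 := by
  have h : ((2 : ℕ) : ZMod p) ≠ 0 := by
    rw [Ne, ZMod.natCast_eq_zero_iff]
    exact fun h => hodd ((Nat.prime_dvd_prime_iff_eq hp.out Nat.prime_two).1 h)
  simpa using h

lemma factK_ne_zero (hodd : p ≠ 2) {m : ℕ} (hm : m ≤ (p - 1) / 2) :
    ((m.factorial : ℕ) : ZMod p) ≠ 0 := by
  rw [Ne, ZMod.natCast_eq_zero_iff]
  intro h
  have h1 := (Nat.Prime.dvd_factorial hp.out).1 h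
  have h2 := two_n_add_one (p := p) hodd
  omega

lemma choose_congr (hodd : p ≠ 2) {m : ℕ} (hm : m ≤ (p - 1) / 2) :
    (((((p - 1) / 2) + m).choose m : ℕ) : ZMod p)
      = (-1) ^ m * ((((p - 1) / 2).choose m : ℕ) : ZMod p) := by
  set n := (p - 1) / 2 with hn
  have h2n : 2 * n + 1 = p := two_n_add_one hodd
  have hfac : ((m.factorial : ℕ) : ZMod p) ≠ 0 := factK_ne_zero hodd hm
  apply mul_right_cancel₀ hfac
  have e1 : (n + m).choose m * m.factorial = (n + m).descFactorial m := by
    rw [Nat.descFactorial_eq_factorial_mul_choose]; ring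
  have e2 : n.choose m * m.factorial = n.descFactorial m := by
    rw [Nat.descFactorial_eq_factorial_mul_choose]; ring
  have key : (((n + m).descFactorial m : ℕ) : ZMod p)
      = (-1) ^ m * ((n.descFactorial m : ℕ) : ZMod p) := by
    rw [Nat.descFactorial_eq_prod_range, Nat.descFactorial_eq_prod_range,
      Nat.cast_prod, Nat.cast_prod]
    have hterm : ∀ i ∈ range m,
        ((n + m - i : ℕ) : ZMod p) = - ((n - (m - 1 - i) : ℕ) : ZMod p) := by
      intro i hi
      rw [mem_range] at hi
      have hsum : (n + m - i) + (n - (m - 1 - i)) = p := by omega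
      have hc := congrArg (Nat.cast : ℕ → ZMod p) hsum
      rw [Nat.cast_add, ZMod.natCast_self] at hc
      exact eq_neg_of_add_eq_zero_left hc
    calc ∏ i ∈ range m, ((n + m - i : ℕ) : ZMod p)
        = ∏ i ∈ range m, - ((n - (m - 1 - i) : ℕ) : ZMod p) :=
          Finset.prod_congr rfl hterm
      _ = (-1) ^ m * ∏ i ∈ range m, ((n - (m - 1 - i) : ℕ) : ZMod p) := by
          rw [Finset.prod_congr rfl
            (fun i _ => (neg_eq_neg_one_mul (((n - (m - 1 - i) : ℕ) : ZMod p)))),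
            Finset.prod_mul_distrib, Finset.prod_const, Finset.card_range]
      _ = (-1) ^ m * ∏ i ∈ range m, ((n - i : ℕ) : ZMod p) := by
          rw [Finset.prod_range_reflect (fun i => ((n - i : ℕ) : ZMod p)) m]
  calc (((n + m).choose m : ℕ) : ZMod p) * ((m.factorial : ℕ) : ZMod p)
      = (((n + m).choose m * m.factorial : ℕ) : ZMod p) := by push_cast; ring
    _ = (((n + m).descFactorial m : ℕ) : ZMod p) := by rw [e1]
    _ = (-1) ^ m * ((n.descFactorial m : ℕ) : ZMod p) := key
    _ = (-1) ^ m * (((n.choose m * m.factorial : ℕ)) : ZMod p) := by rw [e2]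
    _ = (-1) ^ m * (((n.choose m : ℕ)) : ZMod p) * ((m.factorial : ℕ) : ZMod p) := by
        push_cast; ring

/-- The central identity in `ZMod p`. -/
lemma keyK (hodd : p ≠ 2) (u : ZMod p) (hv : (1 : ZMod p) + u ≠ 0) :
    ∑ k ∈ range ((p - 1) / 2 + 1),
        ((((p - 1) / 2).choose k : ℕ) : ZMod p) ^ 2 * (u - 1) ^ k * (u + 1) ^ ((p - 1) / 2 - k)
      = (2 * (u + 1)) ^ ((p - 1) / 2) *
        ∑ k ∈ range ((p - 1) / 2 + 1),
          ((((p - 1) / 2).choose k : ℕ) : ZMod p) ^ 2 * ((3 - u) / (1 + u) - 1) ^ k *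
            ((3 - u) / (1 + u) + 1) ^ ((p - 1) / 2 - k) := by
  have h2n : 2 * ((p - 1) / 2) + 1 = p := two_n_add_one hodd
  set n := (p - 1) / 2 with hn
  have h2 : (2 : ZMod p) ≠ 0 := twoK_ne_zero hodd
  have h2pow : (2 : ZMod p) ^ (p - 1) = 1 := ZMod.pow_card_sub_one_eq_one h2
  have h22 : (2 : ZMod p) ^ (2 * n) = 1 := by
    rw [show 2 * n = p - 1 by omega]; exact h2pow
  have e1 : ((3 - u) / (1 + u) - 1) * (1 + u) = -2 * (u - 1) := by
    rw [sub_mul, div_mul_cancel₀ _ hv]; ring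
  have e2 : ((3 - u) / (1 + u) + 1) * (1 + u) = 4 := by
    rw [add_mul, div_mul_cancel₀ _ hv]; ring
  -- RHS reduction
  have hRHS : (2 * (u + 1)) ^ n *
      ∑ k ∈ range (n + 1), ((n.choose k : ℕ) : ZMod p) ^ 2 * ((3 - u) / (1 + u) - 1) ^ k *
        ((3 - u) / (1 + u) + 1) ^ (n - k)
      = ∑ k ∈ range (n + 1),
          ((n.choose k : ℕ) : ZMod p) ^ 2 * ((-1) ^ k * 2 ^ (n - k)) * (u - 1) ^ k := by
    rw [show (2 * (u + 1) : ZMod p) = 2 * (1 + u) by ring, mul_pow, mul_assoc, Finset.mul_sum,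
      Finset.mul_sum]
    apply Finset.sum_congr rfl
    intro k hk
    rw [mem_range] at hk
    have hvn : (1 + u) ^ n = (1 + u) ^ k * (1 + u) ^ (n - k) := by
      rw [← pow_add]; congr 1; omega
    have step1 : (1 + u) ^ n * (((n.choose k : ℕ) : ZMod p) ^ 2 * ((3 - u) / (1 + u) - 1) ^ k *
        ((3 - u) / (1 + u) + 1) ^ (n - k))
        = ((n.choose k : ℕ) : ZMod p) ^ 2 * (-2 * (u - 1)) ^ k * (4 : ZMod p) ^ (n - k) := by
      calc (1 + u) ^ n * (((n.choose k : ℕ) : ZMod p) ^ 2 * ((3 - u) / (1 + u) - 1) ^ k *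
          ((3 - u) / (1 + u) + 1) ^ (n - k))
          = ((n.choose k : ℕ) : ZMod p) ^ 2 *
            (((3 - u) / (1 + u) - 1) ^ k * (1 + u) ^ k) *
            (((3 - u) / (1 + u) + 1) ^ (n - k) * (1 + u) ^ (n - k)) := by
            rw [hvn]; ring
        _ = ((n.choose k : ℕ) : ZMod p) ^ 2 * (((3 - u) / (1 + u) - 1) * (1 + u)) ^ k *
            (((3 - u) / (1 + u) + 1) * (1 + u)) ^ (n - k) := by rw [mul_pow, mul_pow]
        _ = ((n.choose k : ℕ) : ZMod p) ^ 2 * (-2 * (u - 1)) ^ k * (4 : ZMod p) ^ (n - k) := by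
            rw [e1, e2]
    rw [step1]
    -- now: 2^n * (c * (-2*(u-1))^k * 4^(n-k)) = c * ((-1)^k * 2^(n-k)) * (u-1)^k
    have h4 : (4 : ZMod p) = 2 ^ 2 := by norm_num
    have hneg : (-2 * (u - 1) : ZMod p) ^ k = (-1) ^ k * 2 ^ k * (u - 1) ^ k := by
      rw [show (-2 * (u - 1) : ZMod p) = (-1) * 2 * (u - 1) by ring, mul_pow, mul_pow]
    have hpows : (2 : ZMod p) ^ k * 2 ^ (2 * (n - k)) * 2 ^ n = 2 ^ (n - k) := by
      rw [← pow_add, ← pow_add, show k + 2 * (n - k) + n = 2 * n + (n - k) by omega,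
        pow_add, h22, one_mul]
    calc (2 : ZMod p) ^ n * (((n.choose k : ℕ) : ZMod p) ^ 2 * (-2 * (u - 1)) ^ k *
        (4 : ZMod p) ^ (n - k))
        = ((n.choose k : ℕ) : ZMod p) ^ 2 * ((-1) ^ k * 2 ^ k * (u - 1) ^ k) *
          (2 ^ (2 * (n - k)) * 2 ^ n) := by rw [hneg, h4, ← pow_mul]; ring
      _ = ((n.choose k : ℕ) : ZMod p) ^ 2 * ((-1) ^ k * (u - 1) ^ k) *
          (2 ^ k * 2 ^ (2 * (n - k)) * 2 ^ n) := by ring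
      _ = ((n.choose k : ℕ) : ZMod p) ^ 2 * ((-1) ^ k * (u - 1) ^ k) * 2 ^ (n - k) := by
          rw [hpows]
      _ = ((n.choose k : ℕ) : ZMod p) ^ 2 * ((-1) ^ k * 2 ^ (n - k)) * (u - 1) ^ k := by ring
  rw [hRHS]
  -- LHS reduction
  have hLHS1 : ∑ k ∈ range (n + 1),
      ((n.choose k : ℕ) : ZMod p) ^ 2 * (u - 1) ^ k * (u + 1) ^ (n - k)
      = ∑ k ∈ range (n + 1), ∑ j ∈ range (n + 1 - k),
          ((n.choose k : ℕ) : ZMod p) ^ 2 * (((n - k).choose j : ℕ) : ZMod p) *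
            (2 : ZMod p) ^ (n - k - j) * (u - 1) ^ (k + j) := by
    apply Finset.sum_congr rfl
    intro k hk
    rw [mem_range] at hk
    rw [show (u + 1 : ZMod p) = (u - 1) + 2 by ring, add_pow,
      show n - k + 1 = n + 1 - k by omega, Finset.mul_sum]
    apply Finset.sum_congr rfl
    intro j hj
    rw [pow_add]
    push_cast
    ring
  rw [hLHS1, triangle_sum n
    (fun k j => ((n.choose k : ℕ) : ZMod p) ^ 2 * (((n - k).choose j : ℕ) : ZMod p) *
      (2 : ZMod p) ^ (n - k - j) * (u - 1) ^ (k + j))]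
  apply Finset.sum_congr rfl
  intro m hm
  rw [mem_range] at hm
  have hm' : m ≤ n := by omega
  have hinner : ∀ k ∈ range (m + 1),
      ((n.choose k : ℕ) : ZMod p) ^ 2 * (((n - k).choose (m - k) : ℕ) : ZMod p) *
        (2 : ZMod p) ^ (n - k - (m - k)) * (u - 1) ^ (k + (m - k))
      = (((n.choose k) ^ 2 * ((n - k).choose (m - k)) : ℕ) : ZMod p) *
          ((2 : ZMod p) ^ (n - m) * (u - 1) ^ m) := by
    intro k hk
    rw [mem_range] at hk
    rw [show n - k - (m - k) = n - m by omega, show k + (m - k) = m by omega]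
    push_cast
    ring
  rw [Finset.sum_congr rfl hinner, ← Finset.sum_mul, ← Nat.cast_sum, inner_sum hm',
    Nat.cast_mul, choose_congr hodd hm']
  ring

end Zmod

/-! ### evaluation of the Legendre polynomial -/

lemma legendre_eval (n : ℕ) (x : ℚ) :
    (legendre n).eval x
      = ((2 : ℚ) ^ n)⁻¹ *
        ∑ k ∈ range (n + 1), (n.choose k : ℚ) ^ 2 * (x - 1) ^ k * (x + 1) ^ (n - k) := by
  have harith : ∀ k, k ≤ n →
      n.factorial * (n.choose k) ^ 2 = n.choose k * (n.descFactorial (n - k) * n.descFactorial k) := by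
    intro k hk
    rw [Nat.descFactorial_eq_factorial_mul_choose, Nat.descFactorial_eq_factorial_mul_choose,
      Nat.choose_symm hk, ← Nat.choose_mul_factorial_mul_factorial hk]
    ring
  have hpoly : ((fun q : ℚ[X] => derivative q)^[n] ((X ^ 2 - 1) ^ n))
      = ∑ k ∈ range (n + 1),
          ((n.factorial * (n.choose k) ^ 2 : ℕ)) • ((X - C 1) ^ k * (X + C 1) ^ (n - k)) := by
    have hfac : (X ^ 2 - 1 : ℚ[X]) ^ n = (X - C 1) ^ n * (X + C 1) ^ n := by
      rw [← mul_pow]; congr 1; rw [C_1]; ring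
    show derivative^[n] ((X ^ 2 - 1) ^ n) = _
    rw [hfac, iterate_derivative_mul]
    apply Finset.sum_congr rfl
    intro k hk
    rw [mem_range] at hk
    rw [iterate_derivative_X_sub_pow, iterate_derivative_X_add_pow,
      show n - (n - k) = k by omega]
    simp only [nsmul_eq_mul]
    rw [harith k (by omega)]
    push_cast
    ring
  unfold legendre
  rw [hpoly]
  rw [eval_smul]
  rw [eval_finset_sum]
  simp only [eval_smul, eval_mul, eval_pow, eval_sub, eval_add, eval_X, eval_C, smul_eq_mul,
    nsmul_eq_mul, eval_natCast]
  have hsum : ∑ k ∈ range (n + 1),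
      ((n.factorial * (n.choose k) ^ 2 : ℕ) : ℚ) * ((x - 1) ^ k * (x + 1) ^ (n - k))
      = (n.factorial : ℚ) *
        ∑ k ∈ range (n + 1), (n.choose k : ℚ) ^ 2 * (x - 1) ^ k * (x + 1) ^ (n - k) := by
    rw [Finset.mul_sum]
    apply Finset.sum_congr rfl
    intro k _
    push_cast
    ring
  rw [hsum]
  have hfne : (n.factorial : ℚ) ≠ 0 := Nat.cast_ne_zero.mpr n.factorial_ne_zero
  have h2ne : ((2 : ℚ) ^ n) ≠ 0 := by positivity
  field_simp

section Eval

variable [hp : Fact p.Prime]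

lemma pint_eval (hodd : p ≠ 2) {x : ℚ} (hx : ¬ p ∣ x.den) :
    ¬ p ∣ ((legendre ((p - 1) / 2)).eval x).den := by
  rw [legendre_eval]
  apply pint_mul hp.out (pint_inv_two_pow hp.out hodd _)
  apply pint_sum hp.out
  intro k _
  exact pint_mul hp.out
    (pint_mul hp.out (pint_pow hp.out (pint_natCast hp.out _) 2)
      (pint_pow hp.out (pint_sub hp.out hx (pint_one hp.out)) k))
    (pint_pow hp.out (pint_add hp.out hx (pint_one hp.out)) _)

lemma castK_legendre_eval (hodd : p ≠ 2) {x : ℚ} (hx : ¬ p ∣ x.den) :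
    (((legendre ((p - 1) / 2)).eval x : ℚ) : ZMod p)
      = ((2 : ZMod p) ^ ((p - 1) / 2))⁻¹ *
        ∑ k ∈ range ((p - 1) / 2 + 1),
          ((((p - 1) / 2).choose k : ℕ) : ZMod p) ^ 2 * ((x : ZMod p) - 1) ^ k *
            ((x : ZMod p) + 1) ^ ((p - 1) / 2 - k) := by
  set n := (p - 1) / 2 with hn
  have hterm : ∀ k ∈ range (n + 1),
      ¬ p ∣ ((n.choose k : ℚ) ^ 2 * (x - 1) ^ k * (x + 1) ^ (n - k)).den := fun k _ =>
    pint_mul hp.out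
      (pint_mul hp.out (pint_pow hp.out (pint_natCast hp.out _) 2)
        (pint_pow hp.out (pint_sub hp.out hx (pint_one hp.out)) k))
      (pint_pow hp.out (pint_add hp.out hx (pint_one hp.out)) _)
  rw [legendre_eval]
  rw [castK_mul (pint_inv_two_pow hp.out hodd n) (pint_sum hp.out _ _ hterm)]
  congr 1
  · have h1 : (((2 : ℚ) ^ n)⁻¹ : ℚ) = ((2 : ℚ) ^ n)⁻¹ := rfl
    have h2 : ¬ (p : ℤ) ∣ ((2 : ℚ) ^ n).num := by
      have : ((2 : ℚ) ^ n).num = 2 ^ n := by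
        rw [show ((2 : ℚ)) = ((2 : ℤ) : ℚ) by norm_num, ← Int.cast_pow, Rat.num_intCast]
      rw [this]
      intro hh
      have hpz : Prime ((p : ℤ)) := Nat.prime_iff_prime_int.mp hp.out
      exact not_pdvd_two hp.out hodd (hpz.dvd_of_dvd_pow hh)
    rw [Rat.cast_inv_of_ne_zero (numK h2), castK_pow (pint_of_den_one hp.out rfl)]
    norm_num
  · rw [castK_sum _ _ hterm]
    apply Finset.sum_congr rfl
    intro k _
    rw [castK_mul (pint_mul hp.out (pint_pow hp.out (pint_natCast hp.out _) 2)
        (pint_pow hp.out (pint_sub hp.out hx (pint_one hp.out)) k))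
        (pint_pow hp.out (pint_add hp.out hx (pint_one hp.out)) _),
      castK_mul (pint_pow hp.out (pint_natCast hp.out _) 2)
        (pint_pow hp.out (pint_sub hp.out hx (pint_one hp.out)) k),
      castK_pow (pint_natCast hp.out _), castK_pow (pint_sub hp.out hx (pint_one hp.out)),
      castK_pow (pint_add hp.out hx (pint_one hp.out)),
      castK_sub hx (pint_one hp.out), castK_add hx (pint_one hp.out)]
    push_cast
    ring

lemma legsym_cast (hodd : p ≠ 2) {q : ℚ} (hq_den : ¬ p ∣ q.den)
    (hq0 : ((q : ℚ) : ZMod p) ≠ 0) :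
    ((legendreSym p (q.num * q.den) : ℤ) : ZMod p) = ((q : ℚ) : ZMod p) ^ ((p - 1) / 2) := by
  have h2n : 2 * ((p - 1) / 2) + 1 = p := two_n_add_one hodd
  rw [legendreSym.eq_pow]
  have hdK : ((q.den : ℕ) : ZMod p) ≠ 0 := denK hq_den
  have hnum_eq : ((q.num : ℤ) : ZMod p) = ((q : ℚ) : ZMod p) * ((q.den : ℕ) : ZMod p) := by
    rw [Rat.cast_def, div_mul_cancel₀ _ hdK]
  have hpush : (((q.num * q.den : ℤ)) : ZMod p)
      = ((q : ℚ) : ZMod p) * ((q.den : ℕ) : ZMod p) ^ 2 := by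
    push_cast
    rw [hnum_eq]
    ring
  rw [hpush, mul_pow, ← pow_mul, show 2 * (p / 2) = p - 1 by omega,
    ZMod.pow_card_sub_one_eq_one hdK, mul_one, show p / 2 = (p - 1) / 2 by omega]

end Eval

end Stmt13Aux

open Stmt13Aux in
theorem stmt13 (p : ℕ) [Fact p.Prime] (hodd : p ≠ 2) (x : ℚ) (hden : ¬ (p ∣ x.den))
    (hx0 : ¬ ((p : ℤ) ∣ x.num)) (hx1 : ¬ ((p : ℤ) ∣ (x + 1).num)) :
    ratCongr p 1 ((legendre ((p - 1) / 2)).eval x)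
      ((ratLegendreSym p (2 * (x + 1)) : ℚ) *
        (legendre ((p - 1) / 2)).eval ((3 - x) / (1 + x))) := by
  have hpp : p.Prime := Fact.out
  -- basic p-integrality facts
  have pint3 : ¬ p ∣ (3 : ℚ).den := pint_of_den_one hpp rfl
  have pint2 : ¬ p ∣ (2 : ℚ).den := pint_of_den_one hpp rfl
  have h1x_den : ¬ p ∣ (1 + x).den := pint_add hpp (pint_one hpp) hden
  have h1x_num : ¬ (p : ℤ) ∣ (1 + x).num := by rwa [add_comm] at hx1
  have h3x_den : ¬ p ∣ (3 - x).den := pint_sub hpp pint3 hden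
  have h1x0 : (1 + x) ≠ 0 := by
    intro h0
    apply h1x_num
    rw [h0]
    simp
  have hb_numQ : ((1 + x).num : ℚ) ≠ 0 := Int.cast_ne_zero.mpr (Rat.num_ne_zero.mpr h1x0)
  have had : ((3 - x).den : ℚ) ≠ 0 := Nat.cast_ne_zero.mpr (3 - x).den_nz
  have hbd : ((1 + x).den : ℚ) ≠ 0 := Nat.cast_ne_zero.mpr (1 + x).den_nz
  have ha2 : ((3 - x).num : ℚ) = (3 - x) * (3 - x).den :=
    (div_eq_iff had).mp (Rat.num_div_den _)
  have hb2 : ((1 + x).num : ℚ) = (1 + x) * (1 + x).den :=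
    (div_eq_iff hbd).mp (Rat.num_div_den _)
  have hy_eq : (3 - x) / (1 + x)
      = (((3 - x).num * (1 + x).den : ℤ) : ℚ) / (((3 - x).den * (1 + x).num : ℤ) : ℚ) := by
    rw [div_eq_div_iff h1x0 (by push_cast; exact mul_ne_zero had hb_numQ)]
    push_cast
    linear_combination (-(((1 + x).den : ℚ)) * (1 + x)) * ha2 +
      ((3 - x) * (((3 - x).den : ℚ))) * hb2
  have hyden : ¬ p ∣ ((3 - x) / (1 + x)).den := by
    rw [hy_eq]
    apply pint_div_int hpp
    intro hdvd
    have hpz : Prime ((p : ℤ)) := Nat.prime_iff_prime_int.mp hpp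
    rcases hpz.dvd_mul.1 hdvd with h' | h'
    · exact h3x_den (Int.ofNat_dvd.mp h')
    · exact h1x_num h'
  -- casts to ZMod p
  have hu1 : (((1 + x : ℚ)) : ZMod p) = 1 + ((x : ℚ) : ZMod p) := by
    rw [castK_add (pint_one hpp) hden, Rat.cast_one]
  have hu1' : (1 : ZMod p) + ((x : ℚ) : ZMod p) ≠ 0 := by
    rw [← hu1, Rat.cast_def]
    exact div_ne_zero (numK h1x_num) (denK h1x_den)
  have hu3 : (((3 - x : ℚ)) : ZMod p) = 3 - ((x : ℚ) : ZMod p) := by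
    rw [castK_sub pint3 hden, Rat.cast_ofNat]
  have hyK : (((3 - x) / (1 + x) : ℚ) : ZMod p)
      = (3 - ((x : ℚ) : ZMod p)) / (1 + ((x : ℚ) : ZMod p)) := by
    rw [castK_div h3x_den h1x_num, hu3, hu1]
  -- the Legendre-symbol factor
  have hq_den : ¬ p ∣ (2 * (x + 1) : ℚ).den :=
    pint_mul hpp pint2 (pint_add hpp hden (pint_one hpp))
  have hqK : (((2 * (x + 1) : ℚ)) : ZMod p) = 2 * (((x : ℚ) : ZMod p) + 1) := by
    rw [castK_mul pint2 (pint_add hpp hden (pint_one hpp)), Rat.cast_ofNat,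
      castK_add hden (pint_one hpp), Rat.cast_one]
  have hq0 : (((2 * (x + 1) : ℚ)) : ZMod p) ≠ 0 := by
    rw [hqK]
    refine mul_ne_zero (twoK_ne_zero hodd) ?_
    rwa [add_comm] at hu1'
  have hchi : ((ratLegendreSym p (2 * (x + 1)) : ℤ) : ZMod p)
      = (2 * (((x : ℚ) : ZMod p) + 1)) ^ ((p - 1) / 2) := by
    unfold ratLegendreSym
    rw [legsym_cast hodd hq_den hq0, hqK]
  -- assemble
  apply ratCongr_of_cast_eq (pint_eval hodd hden)
    (pint_mul hpp (pint_intCast hpp _) (pint_eval hodd hyden))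
  rw [castK_mul (pint_intCast hpp _) (pint_eval hodd hyden), Rat.cast_intCast, hchi,
    castK_legendre_eval hodd hden, castK_legendre_eval hodd hyden, hyK,
    keyK hodd (((x : ℚ) : ZMod p)) hu1']
  ring
end

section
/- Let p be a prime with p \equiv 3 (mod 4). Then p divides the numerator of P_{(p-1)/2}(3), where P_n is the n-th Legendre polynomial. -/
open Polynomial Finset


lemma sum_choose_mul_choose (n i : ℕ) (hi : i ≤ n) :
    ∑ k ∈ range (n+1), n.choose k * k.choose i = n.choose i * 2^(n-i) := by
  obtain ⟨m, rfl⟩ : ∃ m, n = i + m := ⟨n - i, by omega⟩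
  rw [Finset.range_eq_Ico,
    ← Finset.sum_subset (Finset.Ico_subset_Ico_left (Nat.zero_le i) :
      Finset.Ico i (i+m+1) ⊆ Finset.Ico 0 (i+m+1))
      (by
        intro x hx hnx
        simp only [Finset.mem_Ico] at hx hnx
        have : x < i := by omega
        rw [Nat.choose_eq_zero_of_lt this, Nat.mul_zero])]
  rw [Finset.sum_Ico_eq_sum_range]
  have h1 : i + m + 1 - i = m + 1 := by omega
  rw [h1]
  have h2 : ∀ j ∈ range (m+1), (i+m).choose (i+j) * (i+j).choose i
      = (i+m).choose i * m.choose j := by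
    intro j hj
    rw [Finset.mem_range] at hj
    rw [Nat.choose_mul (by omega)]
    congr 2 <;> omega
  rw [Finset.sum_congr rfl h2, ← Finset.mul_sum, Nat.sum_range_choose,
    Nat.add_sub_cancel_left]

lemma choose_add_eq (n k : ℕ) :
    (n + k).choose k = ∑ i ∈ range (k+1), n.choose i * k.choose i := by
  rw [Nat.add_choose_eq, Finset.Nat.sum_antidiagonal_eq_sum_range_succ_mk]
  refine Finset.sum_congr rfl fun i hi => ?_
  rw [Finset.mem_range] at hi
  rw [Nat.choose_symm (by omega)]

lemma delannoy_eq (n : ℕ) :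
    ∑ k ∈ range (n+1), n.choose k ^ 2 * 2^(n-k)
      = ∑ k ∈ range (n+1), n.choose k * (n + k).choose k := by
  symm
  calc ∑ k ∈ range (n+1), n.choose k * (n+k).choose k
      = ∑ k ∈ range (n+1), ∑ i ∈ range (n+1), n.choose k * (n.choose i * k.choose i) := by
        refine Finset.sum_congr rfl fun k hk => ?_
        rw [Finset.mem_range] at hk
        rw [choose_add_eq, Finset.mul_sum]
        refine Finset.sum_subset (Finset.range_subset_range.2 (by omega)) ?_
        intro x hx hnx
        rw [Finset.mem_range, Nat.lt_succ_iff, Nat.not_le] at hnx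
        rw [Nat.choose_eq_zero_of_lt hnx, Nat.mul_zero, Nat.mul_zero]
    _ = ∑ i ∈ range (n+1), ∑ k ∈ range (n+1), n.choose k * (n.choose i * k.choose i) :=
        Finset.sum_comm
    _ = ∑ i ∈ range (n+1), n.choose i ^ 2 * 2^(n-i) := by
        refine Finset.sum_congr rfl fun i hi => ?_
        rw [Finset.mem_range] at hi
        calc ∑ k ∈ range (n+1), n.choose k * (n.choose i * k.choose i)
            = n.choose i * ∑ k ∈ range (n+1), n.choose k * k.choose i := by
              rw [Finset.mul_sum]; exact Finset.sum_congr rfl fun k _ => by ring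
          _ = n.choose i * (n.choose i * 2^(n-i)) := by
              rw [sum_choose_mul_choose n i (by omega)]
          _ = n.choose i ^ 2 * 2^(n-i) := by ring


lemma asc_congr (p n : ℕ) (hp : p = 2*n+1) :
    ∀ k, k ≤ n → (((n+1).ascFactorial k : ℕ) : ZMod p)
      = (-1)^k * ((n.descFactorial k : ℕ) : ZMod p) := by
  intro k
  induction k with
  | zero => simp
  | succ k ih =>
    intro hk
    rw [Nat.ascFactorial_succ, Nat.descFactorial_succ, Nat.cast_mul, Nat.cast_mul,
      ih (by omega)]
    have h2 : ((n + 1 + k : ℕ) : ZMod p) = -((n - k : ℕ) : ZMod p) := by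
      have h3 : ((n + 1 + k) + (n - k) : ℕ) = p := by omega
      have h4 : (((n + 1 + k) + (n - k) : ℕ) : ZMod p) = 0 := by
        rw [h3]; exact ZMod.natCast_self p
      rw [Nat.cast_add] at h4
      linear_combination h4
    rw [h2]; ring

lemma choose_congr (p n : ℕ) (hpp : p.Prime) (hp : p = 2*n+1) (k : ℕ) (hk : k ≤ n) :
    (((n+k).choose k : ℕ) : ZMod p) = (-1)^k * ((n.choose k : ℕ) : ZMod p) := by
  haveI : Fact p.Prime := ⟨hpp⟩
  have h1 := asc_congr p n hp k hk
  rw [Nat.ascFactorial_eq_factorial_mul_choose, Nat.descFactorial_eq_factorial_mul_choose,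
    Nat.cast_mul, Nat.cast_mul] at h1
  have hfac : ((k.factorial : ℕ) : ZMod p) ≠ 0 := by
    rw [Ne, ZMod.natCast_eq_zero_iff]
    intro hdvd
    have := (Nat.Prime.dvd_factorial hpp).1 hdvd
    omega
  refine mul_left_cancel₀ hfac ?_
  rw [h1]; ring

lemma alt_sum (n : ℕ) (hn : n % 2 = 1) :
    ∑ k ∈ range (n+1), (-1:ℤ)^k * (n.choose k : ℤ)^2 = 0 := by
  have h := Finset.sum_range_reflect (fun k => (-1:ℤ)^k * (n.choose k : ℤ)^2) (n+1)
  have key : ∀ j ∈ range (n+1),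
      (-1:ℤ)^(n + 1 - 1 - j) * ((n.choose (n + 1 - 1 - j) : ℤ))^2
        = -((-1:ℤ)^j * (n.choose j : ℤ)^2) := by
    intro j hj
    rw [Finset.mem_range, Nat.lt_succ_iff] at hj
    have e1 : n + 1 - 1 - j = n - j := by omega
    rw [e1, Nat.choose_symm hj]
    have e2 : (-1:ℤ)^(n-j) = -(-1:ℤ)^j := by
      have e3 : (-1:ℤ)^(n-j) * (-1:ℤ)^j = (-1:ℤ)^n := by
        rw [← pow_add]; congr 1; omega
      have e4 : (-1:ℤ)^n = -1 := Odd.neg_one_pow (Nat.odd_iff.mpr hn)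
      have e5 : (-1:ℤ)^j * (-1:ℤ)^j = 1 := by
        rw [← pow_add]; exact Even.neg_one_pow ⟨j, rfl⟩
      calc (-1:ℤ)^(n-j) = (-1:ℤ)^(n-j) * ((-1:ℤ)^j * (-1:ℤ)^j) := by rw [e5, mul_one]
        _ = ((-1:ℤ)^(n-j) * (-1:ℤ)^j) * (-1:ℤ)^j := by ring
        _ = -(-1:ℤ)^j := by rw [e3, e4]; ring
    rw [e2]; ring
  rw [Finset.sum_congr rfl key, Finset.sum_neg_distrib] at h
  linarith


lemma legendre_eval_three (n : ℕ) :
    (legendre n).eval 3 = ∑ k ∈ Finset.range (n+1), ((n.choose k : ℚ)^2 * 2^(n-k)) := by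
  have h0 : (X - C (1:ℚ)) * (X - C (-1)) = X^2 - 1 := by
    simp only [map_neg, map_one, sub_neg_eq_add]
    ring
  unfold legendre
  rw [show ((X:ℚ[X])^2 - 1) = (X - C 1) * (X - C (-1)) from h0.symm, mul_pow,
    iterate_derivative_mul, eval_smul, smul_eq_mul, eval_finset_sum]
  rw [Finset.mul_sum]
  refine Finset.sum_congr rfl fun k hk => ?_
  obtain ⟨j, rfl⟩ : ∃ j, n = k + j := ⟨n - k, by rw [Finset.mem_range] at hk; omega⟩
  simp only [iterate_derivative_X_sub_pow, eval_smul, eval_mul, eval_pow, eval_sub, eval_X,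
    eval_C, smul_eq_mul, nsmul_eq_mul, Nat.add_sub_cancel_left, Nat.add_sub_cancel, eval_natCast]
  rw [show (3 - 1 : ℚ) = 2 by norm_num, show (3 - -1 : ℚ) = 2^2 by norm_num,
    Nat.descFactorial_eq_factorial_mul_choose, Nat.descFactorial_eq_factorial_mul_choose,
    show (k+j).choose j = (k+j).choose k from (Nat.choose_symm_add).symm]
  have key : ((k+j).choose k : ℚ) * k.factorial * j.factorial = (k+j).factorial := by
    exact_mod_cast congrArg (Nat.cast : ℕ → ℚ)
      (by simpa using Nat.choose_mul_factorial_mul_factorial (Nat.le_add_right k j))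
  have hC : ((k+j).choose k : ℚ) ≠ 0 :=
    Nat.cast_ne_zero.mpr (Nat.choose_pos (Nat.le_add_right k j)).ne'
  push_cast
  rw [← key]
  have h2 : (2:ℚ) ≠ 0 := two_ne_zero
  have hk0 : (k.factorial : ℚ) ≠ 0 := by exact_mod_cast k.factorial_ne_zero
  have hj0 : (j.factorial : ℚ) ≠ 0 := by exact_mod_cast j.factorial_ne_zero
  field_simp
  rw [← pow_mul]
  ring

theorem stmt14 (p : ℕ) (hp : p.Prime) (hp4 : p % 4 = 3) :
    (p : ℤ) ∣ ((legendre ((p - 1) / 2)).eval (3 : ℚ)).num := by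
  haveI : Fact p.Prime := ⟨hp⟩
  set n := (p - 1) / 2 with hn
  have hp2 : p = 2 * n + 1 := by omega
  have hodd : n % 2 = 1 := by omega
  rw [legendre_eval_three]
  have hcast : (∑ k ∈ range (n+1), ((n.choose k : ℚ)^2 * 2^(n-k)))
      = ((∑ k ∈ range (n+1), n.choose k ^ 2 * 2^(n-k) : ℕ) : ℚ) := by
    push_cast
    rfl
  rw [hcast, Rat.num_natCast, Int.natCast_dvd_natCast]
  rw [← ZMod.natCast_eq_zero_iff]
  rw [delannoy_eq]
  push_cast
  calc ∑ k ∈ range (n+1), ((n.choose k : ZMod p) * ((n+k).choose k : ZMod p))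
      = ∑ k ∈ range (n+1), ((-1:ZMod p)^k * (n.choose k : ZMod p)^2) := by
        refine Finset.sum_congr rfl fun k hk => ?_
        rw [Finset.mem_range, Nat.lt_succ_iff] at hk
        rw [choose_congr p n hp hp2 k hk]; ring
    _ = ((∑ k ∈ range (n+1), (-1:ℤ)^k * (n.choose k : ℤ)^2 : ℤ) : ZMod p) := by
        push_cast; rfl
    _ = 0 := by rw [alt_sum n hodd]; simp
end

section
/- Let p be an odd prime and x a rational p-integer with x \not\equiv 0 (mod p). Then \sum_{k=0}^{(p-1)/2} \binom{2k}{k}^2 / 16^k \cdot (x^k - \left(\frac{x}{p}\right) x^{-k}) \equiv 0 \pmod{p}, where (x/p) is the Legendre symbol of the residue of x mod p and x^{-k} is computed mod p. -/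
open Finset Polynomial

lemma central_binom_cong (p : ℕ) [Fact p.Prime] (hodd : p ≠ 2) :
    ∀ k, k ≤ (p - 1) / 2 →
      ((2 * k).choose k : ZMod p) = (-4 : ZMod p) ^ k * (((p - 1) / 2).choose k : ZMod p) := by
  have hp := (Fact.out : p.Prime)
  have hp3 : 3 ≤ p := by
    have h2 := hp.two_le
    rcases Nat.lt_or_ge p 3 with h | h
    · interval_cases p <;> simp_all
    · exact h
  obtain ⟨t, ht⟩ := hp.odd_of_ne_two hodd
  set m := (p - 1) / 2 with hmdef
  have hmp : 2 * m + 1 = p := by omega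
  intro k
  induction k with
  | zero => simp
  | succ k ih =>
    intro hk
    have hck : k ≤ m := by omega
    have hinv : ((k : ZMod p) + 1) ≠ 0 := by
      have : ((k + 1 : ℕ) : ZMod p) ≠ 0 := by
        rw [Ne, ZMod.natCast_eq_zero_iff]
        intro h
        have := Nat.le_of_dvd (by omega) h
        omega
      push_cast at this
      exact this
    have hcb := congrArg (Nat.cast : ℕ → ZMod p) (Nat.succ_mul_centralBinom_succ k)
    have e1 : (k + 1).centralBinom = (2 * (k + 1)).choose (k + 1) := rfl
    have e2 : k.centralBinom = (2 * k).choose k := rfl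
    rw [e1, e2] at hcb
    push_cast at hcb
    have hch := congrArg (Nat.cast : ℕ → ZMod p) (Nat.choose_succ_right_eq m k)
    rw [Nat.cast_mul, Nat.cast_mul, Nat.cast_sub hck] at hch
    push_cast at hch
    have hp0 : (2 * (m : ZMod p) + 1) = 0 := by
      have h := congrArg (Nat.cast : ℕ → ZMod p) hmp
      push_cast at h
      rw [h, ZMod.natCast_self]
    apply mul_left_cancel₀ hinv
    rw [hcb, ih hck]
    linear_combination 4 * (-4 : ZMod p) ^ k * hch
      + 2 * (-4 : ZMod p) ^ k * (m.choose k : ZMod p) * hp0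

theorem stmt15 (p : ℕ) [Fact p.Prime] (hodd : p ≠ 2) (x : ℚ) (hden : ¬ (p ∣ x.den))
    (hx0 : ¬ ((p : ℤ) ∣ x.num)) :
    ratCongr p 1
      (∑ k ∈ Finset.range ((p - 1) / 2 + 1),
        ((2 * k).choose k : ℚ) ^ 2 / 16 ^ k *
          (x ^ k - (ratLegendreSym p x : ℚ) * (x⁻¹) ^ k)) 0 := by
  have hp := (Fact.out : p.Prime)
  have hp3 : 3 ≤ p := by
    have h2 := hp.two_le
    rcases Nat.lt_or_ge p 3 with h | h
    · interval_cases p <;> simp_all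
    · exact h
  obtain ⟨t, ht⟩ := hp.odd_of_ne_two hodd
  set m := (p - 1) / 2 with hmdef
  have hmp : 2 * m + 1 = p := by omega
  set n := x.num with hndef
  set d := (x.den : ℤ) with hddef
  have hn0 : n ≠ 0 := fun h => hx0 (h ▸ dvd_zero _)
  have hd0 : d ≠ 0 := Int.natCast_ne_zero.mpr x.den_nz
  have hnQ : (n : ℚ) ≠ 0 := Int.cast_ne_zero.mpr hn0
  have hdQ : (d : ℚ) ≠ 0 := Int.cast_ne_zero.mpr hd0
  set ε : ℤ := ratLegendreSym p x with hεdef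
  set Z : ℤ := ∑ k ∈ Finset.range (m + 1),
      ((2 * k).choose k : ℤ) ^ 2 * 16 ^ (m - k)
        * (n ^ (m + k) * d ^ (m - k) - ε * (n ^ (m - k) * d ^ (m + k))) with hZdef
  set V : ℤ := 16 ^ m * n ^ m * d ^ m with hVdef
  have hV0 : V ≠ 0 :=
    mul_ne_zero (mul_ne_zero (pow_ne_zero _ (by norm_num)) (pow_ne_zero _ hn0))
      (pow_ne_zero _ hd0)
  have hVQ : (V : ℚ) ≠ 0 := Int.cast_ne_zero.mpr hV0
  have hx : x = (n : ℚ) / (d : ℚ) := by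
    rw [hndef, hddef]
    push_cast
    exact (Rat.num_div_den x).symm
  have hxinv : x⁻¹ = (d : ℚ) / (n : ℚ) := by rw [hx, inv_div]
  -- claim 1: clearing denominators
  have claim1 : (∑ k ∈ Finset.range (m + 1),
        ((2 * k).choose k : ℚ) ^ 2 / 16 ^ k *
          (x ^ k - (ε : ℚ) * (x⁻¹) ^ k)) * (V : ℚ) = (Z : ℚ) := by
    rw [hZdef, Finset.sum_mul]
    push_cast
    apply Finset.sum_congr rfl
    intro k hk
    have hk' : k ≤ m := by have := Finset.mem_range.mp hk; omega
    obtain ⟨j, hj⟩ : ∃ j, m = k + j := ⟨m - k, by omega⟩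
    rw [hxinv, hx, hVdef, hj]
    simp only [Nat.add_sub_cancel_left]
    push_cast
    field_simp
    rw [div_pow, div_pow]
    field_simp
    ring
  -- claim 2: p ∣ Z
  have claim2 : (p : ℤ) ∣ Z := by
    rw [← ZMod.intCast_zmod_eq_zero_iff_dvd]
    set N : ZMod p := ((n : ℤ) : ZMod p) with hNdef
    set D : ZMod p := ((d : ℤ) : ZMod p) with hDdef
    set E : ZMod p := ((ε : ℤ) : ZMod p) with hEdef
    have hN : N ≠ 0 := by
      rw [hNdef, Ne, ZMod.intCast_zmod_eq_zero_iff_dvd]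
      exact hx0
    have hD : D ≠ 0 := by
      rw [hDdef, hddef, Ne]
      push_cast
      rw [ZMod.natCast_eq_zero_iff]
      exact hden
    have hE : E = (N * D) ^ m := by
      have hrfl : ε = legendreSym p (n * d) := rfl
      rw [hEdef, hrfl, legendreSym.eq_pow, show p / 2 = m by omega]
      push_cast
      ring
    have hcast : ((Z : ℤ) : ZMod p) = ∑ k ∈ Finset.range (m + 1),
        ((2 * k).choose k : ZMod p) ^ 2 * 16 ^ (m - k)
          * (N ^ (m + k) * D ^ (m - k) - E * (N ^ (m - k) * D ^ (m + k))) := by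
      rw [hZdef]
      push_cast
      rfl
    rw [hcast]
    have key : ∀ k ∈ Finset.range (m + 1),
        ((2 * k).choose k : ZMod p) ^ 2 * 16 ^ (m - k)
          * (N ^ (m + k) * D ^ (m - k) - E * (N ^ (m - k) * D ^ (m + k)))
        = (16 ^ m * N ^ m) * ((m.choose k : ZMod p) ^ 2 * N ^ k * D ^ (m - k))
          - (16 ^ m * E * D ^ m) * ((m.choose k : ZMod p) ^ 2 * N ^ (m - k) * D ^ k) := by
      intro k hk
      have hk' : k ≤ m := by have := Finset.mem_range.mp hk; omega
      have hC := central_binom_cong p hodd k hk'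
      rw [← hmdef] at hC
      have hC2 : ((2 * k).choose k : ZMod p) ^ 2
          = 16 ^ k * (m.choose k : ZMod p) ^ 2 := by
        rw [hC, mul_pow, pow_right_comm]
        norm_num
      obtain ⟨j, hj⟩ : ∃ j, m = k + j := ⟨m - k, by omega⟩
      rw [hC2, hj]
      simp only [Nat.add_sub_cancel_left]
      ring
    rw [Finset.sum_congr rfl key, Finset.sum_sub_distrib, ← Finset.mul_sum, ← Finset.mul_sum]
    have hsym : (∑ k ∈ Finset.range (m + 1), (m.choose k : ZMod p) ^ 2 * N ^ (m - k) * D ^ k)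
        = ∑ k ∈ Finset.range (m + 1), (m.choose k : ZMod p) ^ 2 * N ^ k * D ^ (m - k) := by
      rw [← Finset.sum_range_reflect (fun k => (m.choose k : ZMod p) ^ 2 * N ^ k * D ^ (m - k))
        (m + 1)]
      apply Finset.sum_congr rfl
      intro k hk
      have hk' : k ≤ m := by have := Finset.mem_range.mp hk; omega
      simp only [Nat.add_sub_cancel]
      rw [Nat.choose_symm hk', show m - (m - k) = k from by omega]
    rw [hsym, hE]
    have hD2 : D ^ m * D ^ m = 1 := by
      rw [← pow_add, show m + m = p - 1 from by omega]
      exact ZMod.pow_card_sub_one_eq_one hD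
    linear_combination (-(16 : ZMod p) ^ m * N ^ m *
      (∑ k ∈ Finset.range (m + 1), (m.choose k : ZMod p) ^ 2 * N ^ k * D ^ (m - k))) * hD2
  obtain ⟨W, hW⟩ := claim2
  refine ⟨(W : ℚ) / (V : ℚ), ?_, ?_⟩
  · rw [sub_zero]
    have hS : (∑ k ∈ Finset.range (m + 1),
        ((2 * k).choose k : ℚ) ^ 2 / 16 ^ k *
          (x ^ k - (ε : ℚ) * (x⁻¹) ^ k)) = (Z : ℚ) / (V : ℚ) := by
      rw [eq_div_iff hVQ]
      exact claim1
    rw [hS, hW]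
    push_cast
    field_simp
  · intro hpc
    have hdvd : ((((W : ℚ) / (V : ℚ)).den : ℤ)) ∣ V := by
      rw [← Rat.divInt_eq_div]
      exact Rat.den_dvd W V
    have hpV : (p : ℤ) ∣ V := dvd_trans (Int.natCast_dvd_natCast.mpr hpc) hdvd
    have hpPrime : Prime (p : ℤ) := Nat.prime_iff_prime_int.mp hp
    rw [hVdef] at hpV
    rcases hpPrime.dvd_mul.mp hpV with h | h
    · rcases hpPrime.dvd_mul.mp h with h' | h'
      · have : (p : ℤ) ∣ 16 := hpPrime.dvd_of_dvd_pow h'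
        have : (p : ℤ) ∣ 2 ^ 4 := by norm_num at this ⊢; exact this
        have := hpPrime.dvd_of_dvd_pow this
        have h2 : p ∣ 2 := Int.natCast_dvd_natCast.mp (by exact_mod_cast this)
        have := Nat.le_of_dvd (by norm_num) h2
        omega
      · exact hx0 (hpPrime.dvd_of_dvd_pow h')
    · have hpd : (p : ℤ) ∣ d := hpPrime.dvd_of_dvd_pow h
      rw [hddef] at hpd
      exact hden (Int.natCast_dvd_natCast.mp hpd)
end

section
/- Let p be an odd prime and x, 1-x both rational p-integers not divisible by p. Then \sum_{k=0}^{(p-1)/2} \binom{2k}{k}^2 / (16x)^k \equiv \left(\frac{x(x-1)}{p}\right) \sum_{k=0}^{(p-1)/2} \binom{2k}{k}^2 / (16(1-x))^k \pmod{p}. -/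
open Finset Polynomial

lemma sum_sq_choose (n j : ℕ) (hj : j ≤ n) :
    ∑ k ∈ range (n + 1), n.choose k ^ 2 * k.choose j
      = n.choose j * (2 * n - j).choose n := by
  have h1 : ∑ k ∈ range (n + 1), n.choose k ^ 2 * k.choose j
      = ∑ k ∈ Ico j (n + 1), n.choose k ^ 2 * k.choose j := by
    rw [range_eq_Ico]
    refine (Finset.sum_subset (Finset.Ico_subset_Ico (by omega) le_rfl) ?_).symm
    intro k hk hk'
    simp only [mem_Ico] at hk hk'
    have : k < j := by omega
    rw [Nat.choose_eq_zero_of_lt this, mul_zero]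
  rw [h1, Finset.sum_Ico_eq_sum_range]
  have h2 : n + 1 - j = (n - j) + 1 := by omega
  rw [h2]
  have h3 : ∀ m ∈ range ((n - j) + 1),
      n.choose (j + m) ^ 2 * (j + m).choose j
        = n.choose j * (n.choose ((n - j) - m) * (n - j).choose m) := by
    intro m hm
    rw [mem_range] at hm
    have hm' : m ≤ n - j := by omega
    have hkn : j + m ≤ n := by omega
    have e : n.choose (j + m) * (j + m).choose j
        = n.choose j * (n - j).choose (j + m - j) :=
      Nat.choose_mul (Nat.le_add_right j m)
    have e2 : j + m - j = m := by omega
    rw [e2] at e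
    have e3 : n.choose (j + m) = n.choose ((n - j) - m) := by
      rw [← Nat.choose_symm hkn]
      congr 1
      omega
    calc n.choose (j + m) ^ 2 * (j + m).choose j
        = n.choose (j + m) * (n.choose (j + m) * (j + m).choose j) := by ring
      _ = n.choose (j + m) * (n.choose j * (n - j).choose m) := by rw [e]
      _ = n.choose j * (n.choose ((n - j) - m) * (n - j).choose m) := by rw [e3]; ring
  rw [Finset.sum_congr rfl h3, ← Finset.mul_sum]
  congr 1
  have hv : (n + (n - j)).choose (n - j)
      = ∑ m ∈ range ((n - j) + 1), n.choose m * (n - j).choose ((n - j) - m) := by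
    rw [Nat.add_choose_eq]
    rw [Finset.Nat.sum_antidiagonal_eq_sum_range_succ (fun a b => n.choose a * (n - j).choose b)]
  have hr : ∑ m ∈ range ((n - j) + 1), n.choose ((n - j) - m) * (n - j).choose m
      = ∑ m ∈ range ((n - j) + 1), n.choose m * (n - j).choose ((n - j) - m) := by
    rw [← Finset.sum_range_reflect (fun m => n.choose m * (n - j).choose ((n - j) - m))
      ((n - j) + 1)]
    apply Finset.sum_congr rfl
    intro m hm
    rw [mem_range] at hm
    congr 2 <;> omega
  rw [hr, ← hv]
  have : n + (n - j) = 2 * n - j := by omega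
  rw [this]
  rw [← Nat.choose_symm (show n - j ≤ 2 * n - j by omega)]
  congr 1
  omega

section
variable {p : ℕ} [Fact p.Prime]

lemma fact_ne_zero {m : ℕ} (h : m < p) : ((m.factorial : ZMod p) ≠ 0) := by
  rw [Ne, ZMod.natCast_eq_zero_iff]
  intro hd
  exact absurd ((Fact.out : p.Prime).dvd_factorial.mp hd) (by omega)

lemma cast_ne_zero_of_lt {m : ℕ} (h0 : 0 < m) (h : m < p) : ((m : ZMod p) ≠ 0) := by
  rw [Ne, ZMod.natCast_eq_zero_iff]
  intro hd
  exact absurd (Nat.le_of_dvd h0 hd) (by omega)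

-- L1
lemma central_eq (hp : 2 * (p / 2) + 1 = p) :
    ∀ k ≤ p / 2, (((2 * k).choose k : ℕ) : ZMod p) = (-4) ^ k * ((p / 2).choose k : ℕ) := by
  set n := p / 2 with hn
  intro k hk
  induction k with
  | zero => simp
  | succ k ih =>
    have hk' : k ≤ n := by omega
    have ihk := ih hk'
    have hnat : (k + 1) * Nat.centralBinom (k + 1) = 2 * (2 * k + 1) * Nat.centralBinom k :=
      Nat.succ_mul_centralBinom_succ k
    have hcb : Nat.centralBinom k = (2 * k).choose k := rfl
    have hcb' : Nat.centralBinom (k + 1) = (2 * (k + 1)).choose (k + 1) := rfl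
    rw [hcb, hcb'] at hnat
    have hchoose : n.choose (k + 1) * (k + 1) = n.choose k * (n - k) :=
      Nat.choose_succ_right_eq n k
    have hknez : ((k + 1 : ℕ) : ZMod p) ≠ 0 := cast_ne_zero_of_lt (by omega) (by omega)
    apply mul_left_cancel₀ hknez
    have h1 : (((k+1) * ((2 * (k + 1)).choose (k + 1)) : ℕ) : ZMod p)
        = ((2 * (2 * k + 1) * ((2 * k).choose k) : ℕ) : ZMod p) := by rw [hnat]
    push_cast at h1 ⊢
    rw [h1, ihk]
    have h2 : ((n.choose (k + 1) * (k + 1) : ℕ) : ZMod p)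
        = ((n.choose k * (n - k) : ℕ) : ZMod p) := by rw [hchoose]
    have hsub : ((n - k : ℕ) : ZMod p) = (n : ZMod p) - k := by
      rw [Nat.cast_sub hk']
    push_cast at h2
    rw [hsub] at h2
    have hpn : ((2 * n + 1 : ℕ) : ZMod p) = 0 := by
      rw [hp]; exact ZMod.natCast_self p
    push_cast at hpn
    -- goal: (k+1) * ((2k).choose k cast) relation
    have : ((2 : ZMod p) * n) = -1 := by linear_combination hpn
    calc (2 * (2 * (k:ZMod p) + 1)) * ((-4) ^ k * ((n.choose k : ℕ) : ZMod p))
        = (-4)^(k+1) * (((n.choose k : ℕ) : ZMod p) * ((n:ZMod p) - k)) := by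
          ring_nf
          linear_combination (-(4:ZMod p)) ^ k * ((n.choose k : ℕ) : ZMod p) * 2 * this
      _ = (-4)^(k+1) * (((n.choose (k+1) : ℕ) : ZMod p) * (k+1)) := by rw [← h2]
      _ = (k + 1) * ((-4)^(k+1) * ((n.choose (k+1) : ℕ) : ZMod p)) := by ring

lemma prod_neg' {j : ℕ} (f : ℕ → ZMod p) :
    ∏ i ∈ range j, (-(f i)) = (-1) ^ j * ∏ i ∈ range j, f i := by
  induction j with
  | zero => simp
  | succ j ih => rw [prod_range_succ, prod_range_succ, ih, pow_succ]; ring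

-- L3
lemma choose_add_eq_s16 (hp : 2 * (p / 2) + 1 = p) {j : ℕ} (hj : j ≤ p / 2) :
    ((((p / 2) + j).choose j : ℕ) : ZMod p) = (-1) ^ j * (((p / 2).choose j : ℕ) : ZMod p) := by
  set n := p / 2 with hn
  have hfac : ((j.factorial : ZMod p) ≠ 0) := fact_ne_zero (by omega)
  have e1 : (((n + j).descFactorial j : ℕ) : ZMod p)
      = ((j.factorial : ℕ) : ZMod p) * (((n + j).choose j : ℕ) : ZMod p) := by
    rw [← Nat.cast_mul, Nat.descFactorial_eq_factorial_mul_choose]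
  have e2 : ((n.descFactorial j : ℕ) : ZMod p)
      = ((j.factorial : ℕ) : ZMod p) * ((n.choose j : ℕ) : ZMod p) := by
    rw [← Nat.cast_mul, Nat.descFactorial_eq_factorial_mul_choose]
  have key : (((n + j).descFactorial j : ℕ) : ZMod p)
      = (-1) ^ j * ((n.descFactorial j : ℕ) : ZMod p) := by
    rw [Nat.descFactorial_eq_prod_range, Nat.descFactorial_eq_prod_range]
    push_cast
    rw [← Finset.prod_range_reflect (fun i => ((n + j - i : ℕ) : ZMod p)) j]
    rw [← prod_neg']
    apply Finset.prod_congr rfl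
    intro i hi
    rw [Finset.mem_range] at hi
    have h1 : n + j - (j - 1 - i) = n + 1 + i := by omega
    rw [h1]
    have h2 : ((n + 1 + i : ℕ) : ZMod p) + ((n - i : ℕ) : ZMod p) = 0 := by
      rw [← Nat.cast_add]
      have : (n + 1 + i) + (n - i) = p := by omega
      rw [this]; exact ZMod.natCast_self p
    linear_combination h2
  apply mul_left_cancel₀ hfac
  rw [← e1, key, e2]; ring


-- L2
lemma choose_sub_eq (hp : 2 * (p / 2) + 1 = p) {j : ℕ} (hj : j ≤ p / 2) :
    (((2 * (p / 2) - j).choose (p / 2) : ℕ) : ZMod p)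
      = (-1) ^ (p / 2) * ((((p / 2) + j).choose (p / 2) : ℕ) : ZMod p) := by
  set n := p / 2 with hn
  have hfac : ((n.factorial : ZMod p) ≠ 0) := fact_ne_zero (by omega)
  have e1 : (((2 * n - j).descFactorial n : ℕ) : ZMod p)
      = ((n.factorial : ℕ) : ZMod p) * (((2 * n - j).choose n : ℕ) : ZMod p) := by
    rw [← Nat.cast_mul, Nat.descFactorial_eq_factorial_mul_choose]
  have e2 : (((n + j).descFactorial n : ℕ) : ZMod p)
      = ((n.factorial : ℕ) : ZMod p) * (((n + j).choose n : ℕ) : ZMod p) := by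
    rw [← Nat.cast_mul, Nat.descFactorial_eq_factorial_mul_choose]
  have key : (((2 * n - j).descFactorial n : ℕ) : ZMod p)
      = (-1) ^ n * (((n + j).descFactorial n : ℕ) : ZMod p) := by
    rw [Nat.descFactorial_eq_prod_range, Nat.descFactorial_eq_prod_range]
    push_cast
    rw [← Finset.prod_range_reflect (fun i => ((n + j - i : ℕ) : ZMod p)) n]
    rw [← prod_neg']
    apply Finset.prod_congr rfl
    intro i hi
    rw [Finset.mem_range] at hi
    have h1 : n + j - (n - 1 - i) = j + 1 + i := by omega
    rw [h1]
    have h2 : ((2 * n - j - i : ℕ) : ZMod p) + ((j + 1 + i : ℕ) : ZMod p) = 0 := by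
      rw [← Nat.cast_add]
      have : (2 * n - j - i) + (j + 1 + i) = p := by omega
      rw [this]; exact ZMod.natCast_self p
    linear_combination h2
  apply mul_left_cancel₀ hfac
  rw [← e1, key, e2]; ring

-- M1
lemma T_one_sub (hp : 2 * (p / 2) + 1 = p) (y : ZMod p) :
    ∑ k ∈ range ((p / 2) + 1), (((p / 2).choose k : ℕ) : ZMod p) ^ 2 * (1 - y) ^ k
      = (-1) ^ (p / 2) *
        ∑ k ∈ range ((p / 2) + 1), (((p / 2).choose k : ℕ) : ZMod p) ^ 2 * y ^ k := by
  set n := p / 2 with hn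
  have step1 : ∀ k ∈ range (n + 1),
      ((n.choose k : ℕ) : ZMod p) ^ 2 * (1 - y) ^ k
        = ∑ j ∈ range (n + 1),
            ((n.choose k : ℕ) : ZMod p) ^ 2 * ((k.choose j : ℕ) * (-y) ^ j) := by
    intro k hk
    rw [mem_range] at hk
    have hpow : (1 - y) ^ k = ∑ j ∈ range (k + 1), (-y) ^ j * 1 ^ (k - j) * k.choose j := by
      rw [← add_pow]
      ring_nf
    have hext : ∑ j ∈ range (k + 1), (-y) ^ j * 1 ^ (k - j) * (k.choose j : ZMod p)
        = ∑ j ∈ range (n + 1), ((k.choose j : ℕ) : ZMod p) * (-y) ^ j := by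
      rw [← Finset.sum_subset (Finset.range_subset_range.mpr (by omega : k + 1 ≤ n + 1))]
      · apply Finset.sum_congr rfl; intro j hj; ring
      · intro j hj hj'
        rw [mem_range] at hj hj'
        rw [Nat.choose_eq_zero_of_lt (by omega)]
        simp
    rw [hpow, hext, Finset.mul_sum]
  rw [Finset.sum_congr rfl step1, Finset.sum_comm]
  rw [Finset.mul_sum]
  apply Finset.sum_congr rfl
  intro j hj
  rw [mem_range] at hj
  have hj' : j ≤ n := by omega
  have inner : ∑ k ∈ range (n + 1),
      ((n.choose k : ℕ) : ZMod p) ^ 2 * (((k.choose j : ℕ) : ZMod p) * (-y) ^ j)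
      = (-y) ^ j * ((∑ k ∈ range (n + 1), n.choose k ^ 2 * k.choose j : ℕ) : ZMod p) := by
    push_cast
    rw [Finset.mul_sum]
    apply Finset.sum_congr rfl; intro k hk; ring
  rw [inner, sum_sq_choose n j hj', Nat.cast_mul, choose_sub_eq hp hj']
  have hsymm : (n + j).choose n = (n + j).choose j := by
    rw [← Nat.choose_symm (Nat.le_add_left j n)]
    congr 1
    omega
  rw [hsymm, choose_add_eq_s16 hp hj']
  rw [neg_pow]
  have h11 : ((-1 : ZMod p)) ^ j * (-1) ^ j = 1 := by
    rw [← mul_pow]; norm_num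
  linear_combination ((-1 : ZMod p) ^ (p / 2) * (((p / 2).choose j : ℕ) : ZMod p) ^ 2 * y ^ j) * h11

-- S y = T (y⁻¹)
lemma S_eq_T (hp : 2 * (p / 2) + 1 = p) (hp2 : p ≠ 2) (y : ZMod p) :
    ∑ k ∈ range ((p / 2) + 1), (((2 * k).choose k : ℕ) : ZMod p) ^ 2 / (16 * y) ^ k
      = ∑ k ∈ range ((p / 2) + 1), (((p / 2).choose k : ℕ) : ZMod p) ^ 2 * (y⁻¹) ^ k := by
  have h2 : (2 : ZMod p) ≠ 0 := by
    have := (Fact.out : p.Prime).two_le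
    intro h
    rw [show ((2 : ZMod p)) = ((2 : ℕ) : ZMod p) by norm_num,
      ZMod.natCast_eq_zero_iff] at h
    rcases ((Nat.prime_dvd_prime_iff_eq (Fact.out : p.Prime) Nat.prime_two).mp h) with rfl
    exact hp2 rfl
  have h16 : (16 : ZMod p) ≠ 0 := by
    intro h
    apply pow_ne_zero 4 h2
    rw [← h]; norm_num
  apply Finset.sum_congr rfl
  intro k hk
  rw [mem_range] at hk
  rw [central_eq hp k (by omega)]
  have : ((-4 : ZMod p) ^ k * ((p / 2).choose k : ℕ)) ^ 2
      = 16 ^ k * (((p / 2).choose k : ℕ) : ZMod p) ^ 2 := by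
    rw [mul_pow, ← pow_mul, pow_mul']
    norm_num
  rw [this, mul_pow]
  have hb : ((16 : ZMod p) ^ k) ≠ 0 := pow_ne_zero k h16
  calc (16 : ZMod p) ^ k * (((p / 2).choose k : ℕ) : ZMod p) ^ 2 / (16 ^ k * y ^ k)
      = (((16 : ZMod p) ^ k)⁻¹ * 16 ^ k) * ((((p / 2).choose k : ℕ) : ZMod p) ^ 2 * (y ^ k)⁻¹) := by
        rw [div_eq_mul_inv, mul_inv]; ring
    _ = (((p / 2).choose k : ℕ) : ZMod p) ^ 2 * (y⁻¹) ^ k := by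
        rw [inv_mul_cancel₀ hb, one_mul, inv_pow]

-- T(y⁻¹) = (y⁻¹)^n T(y)
lemma T_inv (y : ZMod p) (hy : y ≠ 0) :
    ∑ k ∈ range ((p / 2) + 1), (((p / 2).choose k : ℕ) : ZMod p) ^ 2 * (y⁻¹) ^ k
      = (y⁻¹) ^ (p / 2) *
        ∑ k ∈ range ((p / 2) + 1), (((p / 2).choose k : ℕ) : ZMod p) ^ 2 * y ^ k := by
  set n := p / 2 with hn
  rw [Finset.mul_sum]
  rw [← Finset.sum_range_reflect
    (fun k => (y⁻¹) ^ n * ((((n).choose k : ℕ) : ZMod p) ^ 2 * y ^ k)) (n + 1)]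
  apply Finset.sum_congr rfl
  intro k hk
  rw [mem_range] at hk
  have hk' : k ≤ n := by omega
  have e1 : n + 1 - 1 - k = n - k := by omega
  rw [e1, Nat.choose_symm hk']
  have e2 : y ^ (n - k) = y ^ n * (y ^ k)⁻¹ := pow_sub₀ y hy hk'
  rw [e2, inv_pow, inv_pow]
  have h : y ^ n * (y ^ n)⁻¹ = 1 := mul_inv_cancel₀ (pow_ne_zero n hy)
  linear_combination (-((n.choose k : ℕ) ^ 2 * (y ^ k)⁻¹ : ZMod p)) * h
lemma main_zmod (hp : 2 * (p / 2) + 1 = p) (hp2 : p ≠ 2) {u : ZMod p} (hu : u ≠ 0)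
    (hv : 1 - u ≠ 0) :
    ∑ k ∈ range ((p / 2) + 1), (((2 * k).choose k : ℕ) : ZMod p) ^ 2 / (16 * u) ^ k
      = (u * (u - 1)) ^ (p / 2) *
        ∑ k ∈ range ((p / 2) + 1),
          (((2 * k).choose k : ℕ) : ZMod p) ^ 2 / (16 * (1 - u)) ^ k := by
  set n := p / 2 with hn
  rw [S_eq_T hp hp2 u, S_eq_T hp hp2 (1 - u), T_inv u hu, T_inv (1 - u) hv]
  have hT : ∑ k ∈ range (n + 1), ((n.choose k : ℕ) : ZMod p) ^ 2 * u ^ k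
      = (-1) ^ n * ∑ k ∈ range (n + 1), ((n.choose k : ℕ) : ZMod p) ^ 2 * (1 - u) ^ k := by
    have := T_one_sub hp (1 - u)
    rw [sub_sub_cancel] at this
    exact this
  rw [hT]
  have h1 : u ^ n * u ^ n = 1 := by
    rw [← pow_add]
    have e : n + n = p - 1 := by omega
    rw [e, ZMod.pow_card_sub_one_eq_one hu]
  have h2 : (u ^ n)⁻¹ = u ^ n := inv_eq_of_mul_eq_one_right h1
  have h3 : (u * (u - 1)) ^ n * ((1 - u)⁻¹) ^ n = (-1) ^ n * u ^ n := by
    rw [← mul_pow, ← mul_pow]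
    congr 1
    rw [mul_assoc]
    have : (u - 1) * (1 - u)⁻¹ = -1 := by
      rw [show u - 1 = -(1 - u) by ring, neg_mul, mul_inv_cancel₀ hv]
    rw [this]
    ring
  have h3' : (u * (u - 1)) ^ n * ((1 - u) ^ n)⁻¹ = (-1) ^ n * u ^ n := by
    rw [← inv_pow]; exact h3
  rw [inv_pow, h2]
  simp only [← hn]
  linear_combination
    (-(∑ k ∈ range (n + 1), ((n.choose k : ℕ) : ZMod p) ^ 2 * (1 - u) ^ k)) * h3'

lemma ratCongr_of_cast_eq {a b : ℚ} (ha : ¬ p ∣ a.den) (hb : ¬ p ∣ b.den)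
    (h : ((a : ℚ) : ZMod p) = ((b : ℚ) : ZMod p)) : ratCongr p 1 a b := by
  set d := a - b with hd
  have hdden : ¬ p ∣ d.den := by
    intro hdvd
    have h1 : d.den ∣ a.den * (-b).den := by
      rw [hd, sub_eq_add_neg]; exact Rat.add_den_dvd a (-b)
    rw [Rat.neg_den] at h1
    rcases (Fact.out : p.Prime).dvd_mul.mp (hdvd.trans h1) with h2 | h2
    exacts [ha h2, hb h2]
  have hdcast : ((d : ℚ) : ZMod p) = 0 := by
    rw [hd, Rat.cast_sub_of_ne_zero
        (by rwa [Ne, ZMod.natCast_eq_zero_iff] : ((a.den : ℕ) : ZMod p) ≠ 0)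
        (by rwa [Ne, ZMod.natCast_eq_zero_iff] : ((b.den : ℕ) : ZMod p) ≠ 0), h]
    ring
  have hden0 : ((d.den : ℕ) : ZMod p) ≠ 0 := by
    rwa [Ne, ZMod.natCast_eq_zero_iff]
  have hnum : ((d.num : ℤ) : ZMod p) = 0 := by
    rw [Rat.cast_def] at hdcast
    field_simp at hdcast
    simpa using hdcast
  have hpd : (p : ℤ) ∣ d.num := (ZMod.intCast_zmod_eq_zero_iff_dvd _ _).mp hnum
  obtain ⟨m, hm⟩ := hpd
  refine ⟨(m : ℚ) / (d.den : ℚ), ?_, ?_⟩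
  · rw [pow_one, ← hd, eq_comm]
    conv_rhs => rw [← Rat.num_div_den d]
    rw [hm]
    push_cast
    ring
  · intro hdvd
    have h1 : (((m : ℚ) / (d.den : ℚ)).den : ℤ) ∣ (d.den : ℤ) := by
      rw [show ((m : ℚ) / (d.den : ℚ)) = Rat.divInt m d.den by
        rw [Rat.divInt_eq_div]; norm_num]
      exact Rat.den_dvd m d.den
    apply hdden
    exact Nat.dvd_trans hdvd (Int.ofNat_dvd.mp h1)

lemma prime_int : Prime ((p : ℤ)) := Nat.prime_iff_prime_int.mp (Fact.out : p.Prime)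

lemma den_cast_ne_zero {q : ℚ} (hq : ¬ p ∣ q.den) : ((q.den : ℕ) : ZMod p) ≠ 0 := by
  rwa [Ne, ZMod.natCast_eq_zero_iff]

lemma den_mul_not_dvd {q r : ℚ} (hq : ¬ p ∣ q.den) (hr : ¬ p ∣ r.den) : ¬ p ∣ (q * r).den := by
  intro h
  rcases (Fact.out : p.Prime).dvd_mul.mp (h.trans (Rat.mul_den_dvd q r)) with h1 | h1
  exacts [hq h1, hr h1]

lemma pow_repr (q : ℚ) (k : ℕ) :
    q ^ k = Rat.divInt (q.num ^ k) ((q.den : ℤ) ^ k) := by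
  rw [Rat.divInt_eq_div]
  push_cast
  rw [← div_pow, Rat.num_div_den]

lemma den_pow_not_dvd {q : ℚ} (hq : ¬ p ∣ q.den) (k : ℕ) : ¬ p ∣ (q ^ k).den := by
  intro h
  have h1 : ((q ^ k).den : ℤ) ∣ (q.den : ℤ) ^ k := by
    rw [pow_repr q k]; exact Rat.den_dvd _ _
  have h2 : (p : ℤ) ∣ (q.den : ℤ) ^ k := dvd_trans (Int.ofNat_dvd.mpr h) h1
  have h3 : (p : ℤ) ∣ (q.den : ℤ) := prime_int.dvd_of_dvd_pow h2
  exact hq (Int.ofNat_dvd.mp h3)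

lemma num_pow_not_dvd {q : ℚ} (hq : ¬ (p : ℤ) ∣ q.num) (k : ℕ) : ¬ (p : ℤ) ∣ (q ^ k).num := by
  intro h
  have hd : ((q.den : ℤ)) ^ k ≠ 0 := by positivity
  have h1 : (q ^ k).num ∣ q.num ^ k := by
    rw [pow_repr q k]; exact Rat.num_dvd _ hd
  exact hq (prime_int.dvd_of_dvd_pow (h.trans h1))

lemma cast_pow' {q : ℚ} (hq : ¬ p ∣ q.den) (k : ℕ) :
    ((q ^ k : ℚ) : ZMod p) = ((q : ℚ) : ZMod p) ^ k := by
  induction k with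
  | zero => simp
  | succ k ih =>
    rw [pow_succ, pow_succ, ← ih,
      Rat.cast_mul_of_ne_zero (den_cast_ne_zero (den_pow_not_dvd hq k)) (den_cast_ne_zero hq)]

lemma cast_sum_den (s : Finset ℕ) (f : ℕ → ℚ) (hf : ∀ i ∈ s, ¬ p ∣ (f i).den) :
    ¬ p ∣ (∑ i ∈ s, f i).den ∧
      ((∑ i ∈ s, f i : ℚ) : ZMod p) = ∑ i ∈ s, ((f i : ℚ) : ZMod p) := by
  classical
  induction s using Finset.cons_induction with
  | empty =>
    simp only [Finset.sum_empty, Rat.den_zero, Rat.cast_zero]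
    exact ⟨fun h => (Fact.out : p.Prime).ne_one (Nat.dvd_one.mp h), trivial⟩
  | cons i s his ih =>
    obtain ⟨ih1, ih2⟩ := ih (fun j hj => hf j (Finset.mem_cons_of_mem hj))
    have hfi : ¬ p ∣ (f i).den := hf i (Finset.mem_cons_self i s)
    rw [Finset.sum_cons, Finset.sum_cons]
    constructor
    · intro h
      rcases (Fact.out : p.Prime).dvd_mul.mp
        (h.trans (Rat.add_den_dvd (f i) (∑ j ∈ s, f j))) with h1 | h1
      exacts [hfi h1, ih1 h1]
    · rw [Rat.cast_add_of_ne_zero (den_cast_ne_zero hfi) (den_cast_ne_zero ih1), ih2]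

-- facts about 16*y
lemma num16_not_dvd (hp2 : p ≠ 2) {y : ℚ} (hnum : ¬ (p : ℤ) ∣ y.num) :
    ¬ (p : ℤ) ∣ (16 * y).num := by
  intro h
  have hrepr : (16 : ℚ) * y = Rat.divInt (16 * y.num) (y.den : ℤ) := by
    rw [Rat.divInt_eq_div]
    push_cast
    rw [mul_div_assoc, Rat.num_div_den]
  have h1 : (16 * y).num ∣ 16 * y.num := by
    rw [hrepr]; exact Rat.num_dvd _ (by exact_mod_cast y.den_ne_zero)
  rcases prime_int.dvd_mul.mp (h.trans h1) with h2 | h2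
  · have : (p : ℤ) ∣ 2 ^ 4 := by norm_num at h2 ⊢; exact h2
    have h3 : (p : ℤ) ∣ 2 := prime_int.dvd_of_dvd_pow this
    have h4 : p ∣ 2 := Int.ofNat_dvd.mp (by exact_mod_cast h3)
    exact hp2 ((Nat.prime_dvd_prime_iff_eq (Fact.out : p.Prime) Nat.prime_two).mp h4)
  · exact hnum h2

lemma den16 : ((16 : ℚ)).den = 1 := rfl

lemma den16_not_dvd {y : ℚ} (hden : ¬ p ∣ y.den) : ¬ p ∣ ((16 : ℚ) * y).den := by
  apply den_mul_not_dvd _ hden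
  rw [den16]
  exact fun h => (Fact.out : p.Prime).ne_one (Nat.dvd_one.mp h)

-- term lemmas
lemma term_den_not_dvd (hp2 : p ≠ 2) {y : ℚ} (hden : ¬ p ∣ y.den) (hnum : ¬ (p : ℤ) ∣ y.num)
    (C k : ℕ) : ¬ p ∣ ((C : ℚ) ^ 2 / (16 * y) ^ k).den := by
  intro h
  have hBnum : ¬ (p : ℤ) ∣ ((16 * y) ^ k).num := num_pow_not_dvd (num16_not_dvd hp2 hnum) k
  set B := ((16 : ℚ) * y) ^ k with hB
  have hBne : B ≠ 0 := by
    intro h0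
    rw [h0] at hBnum
    exact hBnum (by simp)
  have hnumQne : ((B.num : ℤ) : ℚ) ≠ 0 := by
    exact_mod_cast Rat.num_ne_zero.mpr hBne
  have hnum_eq : ((B.num : ℤ) : ℚ) = B * (B.den : ℚ) := by
    have h0 := Rat.num_div_den B
    rwa [div_eq_iff (by exact_mod_cast B.den_ne_zero : ((B.den : ℕ) : ℚ) ≠ 0)] at h0
  have hrepr : (C : ℚ) ^ 2 / B = Rat.divInt ((C : ℤ) ^ 2 * B.den) B.num := by
    rw [Rat.divInt_eq_div]
    push_cast
    rw [div_eq_div_iff hBne hnumQne, hnum_eq]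
    ring
  have h1 : (((C : ℚ) ^ 2 / B).den : ℤ) ∣ B.num := by
    rw [hrepr]; exact Rat.den_dvd _ _
  exact hBnum (dvd_trans (Int.ofNat_dvd.mpr h) h1)

lemma term_cast (hp2 : p ≠ 2) {y : ℚ} (hden : ¬ p ∣ y.den) (hnum : ¬ (p : ℤ) ∣ y.num)
    (C k : ℕ) :
    (((C : ℚ) ^ 2 / (16 * y) ^ k : ℚ) : ZMod p)
      = ((C : ℕ) : ZMod p) ^ 2 / (16 * ((y : ℚ) : ZMod p)) ^ k := by
  have hBnum : ((((16 * y) ^ k).num : ℤ) : ZMod p) ≠ 0 := by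
    rw [Ne, ZMod.intCast_zmod_eq_zero_iff_dvd]
    exact num_pow_not_dvd (num16_not_dvd hp2 hnum) k
  have hAden : ((((C : ℚ) ^ 2).den : ℕ) : ZMod p) ≠ 0 := by
    have : ((C : ℚ) ^ 2) = ((C ^ 2 : ℕ) : ℚ) := by push_cast; ring
    rw [this, Rat.den_natCast]
    simpa using one_ne_zero
  rw [Rat.cast_div_of_ne_zero hAden hBnum, cast_pow' (den16_not_dvd hden),
    Rat.cast_mul_of_ne_zero (by rw [den16]; simpa using one_ne_zero) (den_cast_ne_zero hden)]
  push_cast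
  ring

lemma leg_cast (hp : 2 * (p / 2) + 1 = p) {q : ℚ} (hqden : ¬ p ∣ q.den) :
    ((ratLegendreSym p q : ℤ) : ZMod p) = (((q : ℚ) : ZMod p)) ^ (p / 2) := by
  rw [ratLegendreSym, legendreSym.eq_pow]
  have hden0 : ((q.den : ℕ) : ZMod p) ≠ 0 := den_cast_ne_zero hqden
  have hnum_eq : ((q.num : ℤ) : ZMod p) = ((q : ℚ) : ZMod p) * ((q.den : ℕ) : ZMod p) := by
    rw [Rat.cast_def, div_mul_cancel₀ _ hden0]
  push_cast
  rw [hnum_eq]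
  have hone : (((q.den : ℕ) : ZMod p) * ((q.den : ℕ) : ZMod p)) ^ (p / 2) = 1 := by
    rw [← pow_two, ← pow_mul]
    have e : 2 * (p / 2) = p - 1 := by omega
    rw [e, ZMod.pow_card_sub_one_eq_one hden0]
  rw [mul_assoc, mul_pow, hone, mul_one]

end

theorem stmt16 (p : ℕ) [Fact p.Prime] (hodd : p ≠ 2) (x : ℚ) (hden : ¬ (p ∣ x.den))
    (hden' : ¬ (p ∣ (1 - x).den)) (hx0 : ¬ ((p : ℤ) ∣ x.num))
    (hx1 : ¬ ((p : ℤ) ∣ (1 - x).num)) :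
    ratCongr p 1
      (∑ k ∈ Finset.range ((p - 1) / 2 + 1), ((2 * k).choose k : ℚ) ^ 2 / (16 * x) ^ k)
      ((ratLegendreSym p (x * (x - 1)) : ℚ) *
        ∑ k ∈ Finset.range ((p - 1) / 2 + 1),
          ((2 * k).choose k : ℚ) ^ 2 / (16 * (1 - x)) ^ k) := by
  have hpp : p.Prime := Fact.out
  have hoddp : p % 2 = 1 := Nat.odd_iff.mp (hpp.odd_of_ne_two hodd)
  have hp2 : 2 ≤ p := hpp.two_le
  have hp : 2 * (p / 2) + 1 = p := by omega
  have hhalf : (p - 1) / 2 = p / 2 := by omega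
  rw [hhalf]
  obtain ⟨hAden, hAcast⟩ := cast_sum_den (p := p) (Finset.range (p / 2 + 1))
    (fun k => ((2 * k).choose k : ℚ) ^ 2 / (16 * x) ^ k)
    (fun k _ => term_den_not_dvd hodd hden hx0 _ k)
  obtain ⟨hBden, hBcast⟩ := cast_sum_den (p := p) (Finset.range (p / 2 + 1))
    (fun k => ((2 * k).choose k : ℚ) ^ 2 / (16 * (1 - x)) ^ k)
    (fun k _ => term_den_not_dvd hodd hden' hx1 _ k)
  have hden1x : (x - 1).den = (1 - x).den := by
    rw [show x - 1 = -(1 - x) by ring, Rat.neg_den]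
  have hqden : ¬ p ∣ (x * (x - 1)).den := by
    intro h
    rcases hpp.dvd_mul.mp (h.trans (Rat.mul_den_dvd x (x - 1))) with h1 | h1
    · exact hden h1
    · rw [hden1x] at h1; exact hden' h1
  have hchiden : ¬ p ∣ ((ratLegendreSym p (x * (x - 1)) : ℚ)).den := by
    rw [Rat.den_intCast]
    exact fun h => hpp.ne_one (Nat.dvd_one.mp h)
  apply ratCongr_of_cast_eq hAden (by exact den_mul_not_dvd hchiden hBden)
  rw [hAcast, Rat.cast_mul_of_ne_zero (den_cast_ne_zero hchiden) (den_cast_ne_zero hBden),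
    hBcast, Rat.cast_intCast, leg_cast hp hqden]
  have hu : ((x : ℚ) : ZMod p) ≠ 0 := by
    rw [Rat.cast_def]
    apply div_ne_zero
    · rw [Ne, ZMod.intCast_zmod_eq_zero_iff_dvd]; exact hx0
    · exact den_cast_ne_zero hden
  have hv' : (((1 - x : ℚ)) : ZMod p) ≠ 0 := by
    rw [Rat.cast_def]
    apply div_ne_zero
    · rw [Ne, ZMod.intCast_zmod_eq_zero_iff_dvd]; exact hx1
    · exact den_cast_ne_zero hden'
  have hone : (((1 : ℚ).den : ℕ) : ZMod p) ≠ 0 := by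
    rw [Rat.den_ofNat]; simpa using one_ne_zero
  have hsub : (((1 - x) : ℚ) : ZMod p) = 1 - ((x : ℚ) : ZMod p) := by
    rw [Rat.cast_sub_of_ne_zero hone (den_cast_ne_zero hden), Rat.cast_one]
  have hv : 1 - ((x : ℚ) : ZMod p) ≠ 0 := by rwa [hsub] at hv'
  have hqcast : (((x * (x - 1)) : ℚ) : ZMod p)
      = ((x : ℚ) : ZMod p) * (((x : ℚ) : ZMod p) - 1) := by
    have hdx1 : ¬ p ∣ (x - 1).den := by rwa [hden1x]
    rw [Rat.cast_mul_of_ne_zero (den_cast_ne_zero hden) (den_cast_ne_zero hdx1),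
      Rat.cast_sub_of_ne_zero (den_cast_ne_zero hden) hone, Rat.cast_one]
  rw [hqcast]
  have hA' : ∑ k ∈ Finset.range (p / 2 + 1),
      ((((2 * k).choose k : ℚ) ^ 2 / (16 * x) ^ k : ℚ) : ZMod p)
      = ∑ k ∈ Finset.range (p / 2 + 1),
        (((2 * k).choose k : ℕ) : ZMod p) ^ 2 / (16 * ((x : ℚ) : ZMod p)) ^ k :=
    Finset.sum_congr rfl fun k _ => term_cast hodd hden hx0 _ k
  have hB' : ∑ k ∈ Finset.range (p / 2 + 1),
      ((((2 * k).choose k : ℚ) ^ 2 / (16 * (1 - x)) ^ k : ℚ) : ZMod p)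
      = ∑ k ∈ Finset.range (p / 2 + 1),
        (((2 * k).choose k : ℕ) : ZMod p) ^ 2
          / (16 * (1 - ((x : ℚ) : ZMod p))) ^ k := by
    rw [← hsub]
    exact Finset.sum_congr rfl fun k _ => term_cast hodd hden' hx1 _ k
  rw [hA', hB']
  exact main_zmod hp hodd hu hv
end

section
/- For every natural number n and variable x, \sum_{k=0}^{n} \binom{2n-2k}{n-k} \binom{2k}{k} x^{2k} = 4^n x^n P_n((x + x^{-1})/2), interpreted as a polynomial identity (both sides are polynomials in x after clearing x^n). -/
open Finset Polynomial

def cc (n k : ℕ) : ℕ := n.choose k * (2 * (n - k)).choose n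

noncomputable def gg (n : ℕ) (x : ℚ) : ℚ :=
  ∑ k ∈ Finset.range (n + 1),
    (-1 : ℚ) ^ k * (cc n k : ℚ) * 4 ^ k * x ^ (2 * k) * (x ^ 2 + 1) ^ (n - 2 * k)

noncomputable def ff (n : ℕ) (x : ℚ) : ℚ :=
  ∑ k ∈ Finset.range (n + 1), ((n - k).centralBinom : ℚ) * (k.centralBinom : ℚ) * x ^ (2 * k)

lemma leval' (n : ℕ) (y : ℚ) : (legendre n).eval y =
    (2 ^ n * n.factorial : ℚ)⁻¹ *
      ∑ k ∈ Finset.range (n + 1),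
        (-1 : ℚ) ^ (k + n) * (n.choose k) * ((2 * k).descFactorial n) * y ^ (2 * k - n) := by
  unfold legendre
  have h1 : ((X ^ 2 - 1 : ℚ[X]) ^ n) =
      ∑ k ∈ Finset.range (n + 1), C ((-1 : ℚ) ^ (k + n) * n.choose k) * X ^ (2 * k) := by
    rw [sub_pow]
    refine Finset.sum_congr rfl fun k hk => ?_
    rw [← pow_mul, map_mul, map_pow, map_neg, map_one, Polynomial.C_eq_natCast]
    ring
  rw [h1, Polynomial.iterate_derivative_sum]
  simp only [Polynomial.iterate_derivative_C_mul, Polynomial.iterate_derivative_X_pow_eq_C_mul]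
  rw [Polynomial.eval_smul]
  simp only [smul_eq_mul, Polynomial.eval_finset_sum, Polynomial.eval_mul, Polynomial.eval_C,
    Polynomial.eval_pow, Polynomial.eval_X]
  congr 1
  refine Finset.sum_congr rfl fun k _ => by ring

lemma cc_zero {n k : ℕ} (h : n < 2 * k) : cc n k = 0 := by
  unfold cc
  rcases le_or_gt k n with h1 | h1
  · have : (2 * (n - k)).choose n = 0 := Nat.choose_eq_zero_of_lt (by omega)
    simp [this]
  · have : n.choose k = 0 := Nat.choose_eq_zero_of_lt h1
    simp [this]

lemma ID (n j : ℕ) :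
    ((n : ℚ) + 2) * cc (n + 2) (j + 1) =
      2 * (2 * (n : ℚ) + 3) * cc (n + 1) (j + 1) + 4 * ((n : ℚ) + 1) * cc n j := by
  rcases lt_trichotomy n (2 * j) with h | h | h
  · rw [cc_zero (by omega : n + 2 < 2 * (j + 1)), cc_zero (by omega : n + 1 < 2 * (j + 1)),
      cc_zero (by omega : n < 2 * j)]
    simp
  · -- n = 2j
    subst h
    have h1 : cc (2 * j + 2) (j + 1) = (2 * (j + 1)).choose (j + 1) := by
      unfold cc
      rw [show 2 * (2 * j + 2 - (j + 1)) = 2 * j + 2 from by omega]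
      rw [show (2 * j + 2).choose (2 * j + 2) = 1 from Nat.choose_self _]
      rw [show 2 * (j + 1) = 2 * j + 2 from by omega]
      ring
    have h2 : cc (2 * j + 1) (j + 1) = 0 := by
      unfold cc
      rw [show 2 * (2 * j + 1 - (j + 1)) = 2 * j from by omega,
        Nat.choose_eq_zero_of_lt (show 2 * j < 2 * j + 1 by omega), mul_zero]
    have h3 : cc (2 * j) j = (2 * j).choose j := by
      unfold cc
      rw [show 2 * (2 * j - j) = 2 * j from by omega, Nat.choose_self]
      ring
    rw [h1, h2, h3]
    have key := Nat.succ_mul_centralBinom_succ j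
    unfold Nat.centralBinom at key
    have keyq : ((j : ℚ) + 1) * (2 * (j + 1)).choose (j + 1) = 2 * (2 * j + 1) * (2 * j).choose j := by
      exact_mod_cast congrArg (Nat.cast (R := ℚ)) key
    push_cast
    nlinarith [keyq]
  · -- generic case 2j < n
    obtain ⟨m, rfl⟩ : ∃ m, n = 2 * j + m + 1 := ⟨n - 2 * j - 1, by omega⟩
    unfold cc
    rw [show 2 * (2 * j + m + 1 + 2 - (j + 1)) = 2 * j + 2 * m + 4 from by omega,
      show 2 * (2 * j + m + 1 + 1 - (j + 1)) = 2 * j + 2 * m + 2 from by omega,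
      show 2 * (2 * j + m + 1 - j) = 2 * j + 2 * m + 2 from by omega]
    rw [Nat.cast_mul, Nat.cast_mul, Nat.cast_mul]
    rw [Nat.cast_choose ℚ (show j + 1 ≤ 2 * j + m + 1 + 2 by omega),
      Nat.cast_choose ℚ (show 2 * j + m + 1 + 2 ≤ 2 * j + 2 * m + 4 by omega),
      Nat.cast_choose ℚ (show j + 1 ≤ 2 * j + m + 1 + 1 by omega),
      Nat.cast_choose ℚ (show 2 * j + m + 1 + 1 ≤ 2 * j + 2 * m + 2 by omega),
      Nat.cast_choose ℚ (show j ≤ 2 * j + m + 1 by omega),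
      Nat.cast_choose ℚ (show 2 * j + m + 1 ≤ 2 * j + 2 * m + 2 by omega)]
    rw [show 2 * j + m + 1 + 2 - (j + 1) = j + m + 2 from by omega,
      show 2 * j + 2 * m + 4 - (2 * j + m + 1 + 2) = m + 1 from by omega,
      show 2 * j + m + 1 + 1 - (j + 1) = j + m + 1 from by omega,
      show 2 * j + 2 * m + 2 - (2 * j + m + 1 + 1) = m from by omega,
      show 2 * j + m + 1 - j = j + m + 1 from by omega,
      show 2 * j + 2 * m + 2 - (2 * j + m + 1) = m + 1 from by omega]
    have F1 : ((2 * j + 2 * m + 4).factorial : ℚ) =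
        ((2 * j + 2 * m + 4) * (2 * j + 2 * m + 3) : ℕ) * (2 * j + 2 * m + 2).factorial := by
      rw [show 2 * j + 2 * m + 4 = (2 * j + 2 * m + 3) + 1 from by omega, Nat.factorial_succ,
        show 2 * j + 2 * m + 3 = (2 * j + 2 * m + 2) + 1 from by omega, Nat.factorial_succ]
      push_cast; ring
    have F2 : ((j + m + 2).factorial : ℚ) = ((j + m + 2) : ℕ) * (j + m + 1).factorial := by
      rw [show j + m + 2 = (j + m + 1) + 1 from by omega, Nat.factorial_succ]
      push_cast; ring
    have F3 : ((j + 1).factorial : ℚ) = ((j + 1) : ℕ) * j.factorial := by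
      rw [Nat.factorial_succ]; push_cast; ring
    have F4 : ((m + 1).factorial : ℚ) = ((m + 1) : ℕ) * m.factorial := by
      rw [Nat.factorial_succ]; push_cast; ring
    rw [F1, F2, F3, F4]
    have n1 : ((2 * j + m + 1 + 2).factorial : ℚ) ≠ 0 := by exact_mod_cast Nat.factorial_ne_zero _
    have n2 : ((2 * j + m + 1 + 1).factorial : ℚ) ≠ 0 := by exact_mod_cast Nat.factorial_ne_zero _
    have n3 : ((2 * j + m + 1).factorial : ℚ) ≠ 0 := by exact_mod_cast Nat.factorial_ne_zero _
    have n4 : ((j + m + 1).factorial : ℚ) ≠ 0 := by exact_mod_cast Nat.factorial_ne_zero _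
    have n5 : (j.factorial : ℚ) ≠ 0 := by exact_mod_cast Nat.factorial_ne_zero _
    have n6 : (m.factorial : ℚ) ≠ 0 := by exact_mod_cast Nat.factorial_ne_zero _
    have n7 : ((2 * j + 2 * m + 2).factorial : ℚ) ≠ 0 := by exact_mod_cast Nat.factorial_ne_zero _
    push_cast
    field_simp
    ring

lemma cc_zero_left (m : ℕ) : cc m 0 = Nat.centralBinom m := by
  simp [cc, Nat.centralBinom]

lemma cb_step (n : ℕ) :
    ((n : ℚ) + 2) * cc (n + 2) 0 = 2 * (2 * (n : ℚ) + 3) * cc (n + 1) 0 := by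
  rw [cc_zero_left, cc_zero_left]
  have := Nat.succ_mul_centralBinom_succ (n + 1)
  have hq : ((n : ℚ) + 1 + 1) * (Nat.centralBinom (n + 1 + 1)) =
      2 * (2 * ((n : ℚ) + 1) + 1) * Nat.centralBinom (n + 1) := by
    exact_mod_cast congrArg (Nat.cast (R := ℚ)) this
  push_cast at hq ⊢
  linarith [hq]

lemma Rg (n : ℕ) (x : ℚ) :
    ((n : ℚ) + 2) * gg (n + 2) x =
      2 * (2 * (n : ℚ) + 3) * (x ^ 2 + 1) * gg (n + 1) x -
        16 * ((n : ℚ) + 1) * x ^ 2 * gg n x := by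
  unfold gg
  rw [show n + 2 + 1 = (n + 2) + 1 from rfl, Finset.sum_range_succ]
  have htop : ((-1 : ℚ)) ^ (n + 2) * (cc (n + 2) (n + 2) : ℚ) * 4 ^ (n + 2) *
      x ^ (2 * (n + 2)) * (x ^ 2 + 1) ^ (n + 2 - 2 * (n + 2)) = 0 := by
    rw [cc_zero (by omega)]
    simp
  rw [htop, add_zero]
  rw [Finset.mul_sum, Finset.mul_sum, Finset.mul_sum]
  rw [Finset.sum_range_succ' (fun k => ((n : ℚ) + 2) *
    ((-1 : ℚ) ^ k * (cc (n + 2) k : ℚ) * 4 ^ k * x ^ (2 * k) * (x ^ 2 + 1) ^ (n + 2 - 2 * k)))]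
  rw [Finset.sum_range_succ' (fun k => 2 * (2 * (n : ℚ) + 3) * (x ^ 2 + 1) *
    ((-1 : ℚ) ^ k * (cc (n + 1) k : ℚ) * 4 ^ k * x ^ (2 * k) * (x ^ 2 + 1) ^ (n + 1 - 2 * k)))]
  rw [eq_sub_iff_add_eq, add_right_comm, ← Finset.sum_add_distrib]
  congr 1
  · refine Finset.sum_congr rfl fun k hk => ?_
    rw [Finset.mem_range] at hk
    -- termwise identity for index k+1
    rw [show n + 2 - 2 * (k + 1) = n - 2 * k from by omega]
    rcases le_or_gt (2 * k + 1) n with h | h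
    · rw [show n - 2 * k = (n - (2 * k + 1)) + 1 from by omega,
        show n + 1 - 2 * (k + 1) = n - (2 * k + 1) from by omega, pow_succ]
      linear_combination ((-1 : ℚ)) ^ (k + 1) * 4 ^ (k + 1) * x ^ (2 * (k + 1)) *
        ((x ^ 2 + 1) ^ (n - (2 * k + 1)) * (x ^ 2 + 1)) * (ID n k)
    · have hz : ((cc (n + 1) (k + 1) : ℕ) : ℚ) = 0 := by
        rw [cc_zero (by omega)]; norm_num
      have hID := ID n k
      rw [hz] at hID
      rw [hz]
      linear_combination ((-1 : ℚ)) ^ (k + 1) * 4 ^ (k + 1) * x ^ (2 * (k + 1)) *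
        ((x ^ 2 + 1) ^ (n - 2 * k)) * hID
  · -- the k = 0 terms
    have := cb_step n
    rw [show (2 : ℕ) * 0 = 0 from rfl]
    rw [show n + 2 - 0 = n + 2 from rfl, show n + 1 - 0 = n + 1 from rfl]
    rw [show (x ^ 2 + 1) ^ (n + 2) = (x ^ 2 + 1) ^ (n + 1) * (x ^ 2 + 1) from by
      rw [← pow_succ]]
    linear_combination ((x ^ 2 + 1) ^ (n + 1) * (x ^ 2 + 1)) * this

lemma cbq (m : ℕ) : ((m : ℚ) + 1) * ((m + 1).centralBinom : ℚ) =
    2 * (2 * (m : ℚ) + 1) * (m.centralBinom : ℚ) := by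
  have := Nat.succ_mul_centralBinom_succ m
  exact_mod_cast congrArg (Nat.cast (R := ℚ)) this

lemma Rf (n : ℕ) (x : ℚ) :
    ((n : ℚ) + 2) * ff (n + 2) x =
      2 * (2 * (n : ℚ) + 3) * (x ^ 2 + 1) * ff (n + 1) x -
        16 * ((n : ℚ) + 1) * x ^ 2 * ff n x := by
  rw [eq_sub_iff_add_eq]
  unfold ff
  have key1 : ((n : ℚ) + 2) *
      ∑ k ∈ Finset.range (n + 2 + 1), ((n + 2 - k).centralBinom : ℚ) * (k.centralBinom : ℚ) * x ^ (2 * k)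
      = (∑ k ∈ Finset.range (n + 2),
          2 * (2 * (((n + 1 - k : ℕ)) : ℚ) + 1) * ((n + 1 - k).centralBinom : ℚ) * (k.centralBinom : ℚ) * x ^ (2 * k))
        + ∑ k ∈ Finset.range (n + 2),
          2 * (2 * (k : ℚ) + 1) * ((n + 1 - k).centralBinom : ℚ) * (k.centralBinom : ℚ) * x ^ (2 * k + 2) := by
    rw [Finset.mul_sum]
    have split : ∀ k ∈ Finset.range (n + 2 + 1),
        ((n : ℚ) + 2) * (((n + 2 - k).centralBinom : ℚ) * (k.centralBinom : ℚ) * x ^ (2 * k))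
        = (((n + 2 - k : ℕ)) : ℚ) * ((n + 2 - k).centralBinom : ℚ) * (k.centralBinom : ℚ) * x ^ (2 * k)
          + ((k : ℚ)) * ((n + 2 - k).centralBinom : ℚ) * (k.centralBinom : ℚ) * x ^ (2 * k) := by
      intro k hk
      rw [Finset.mem_range] at hk
      rw [Nat.cast_sub (by omega : k ≤ n + 2)]
      push_cast
      ring
    rw [Finset.sum_congr rfl split, Finset.sum_add_distrib]
    congr 1
    · -- first sum : peel top, then apply cbq
      rw [Finset.sum_range_succ]
      rw [show n + 2 - (n + 2) = 0 from by omega]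
      norm_num
      refine Finset.sum_congr rfl fun k hk => ?_
      rw [Finset.mem_range] at hk
      rw [show n + 2 - k = (n + 1 - k) + 1 from by omega]
      have := cbq (n + 1 - k)
      push_cast at this ⊢
      linear_combination ((k.centralBinom : ℚ) * x ^ (2 * k)) * this
    · -- second sum : peel k = 0, reindex, apply cbq
      rw [Finset.sum_range_succ' (fun k =>
        ((k : ℚ)) * ((n + 2 - k).centralBinom : ℚ) * (k.centralBinom : ℚ) * x ^ (2 * k))]
      norm_num
      refine Finset.sum_congr rfl fun k hk => ?_
      rw [Finset.mem_range] at hk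
      rw [show n + 2 - (k + 1) = n + 1 - k from by omega]
      have := cbq k
      push_cast at this ⊢
      linear_combination (((n + 1 - k).centralBinom : ℚ) * x ^ (2 * k + 2)) * this
  rw [key1]
  -- now RHS
  have key2 : 2 * (2 * (n : ℚ) + 3) * (x ^ 2 + 1) *
      ∑ k ∈ Finset.range (n + 1 + 1), ((n + 1 - k).centralBinom : ℚ) * (k.centralBinom : ℚ) * x ^ (2 * k)
      = (∑ k ∈ Finset.range (n + 2),
          2 * (2 * (n : ℚ) + 3) * ((n + 1 - k).centralBinom : ℚ) * (k.centralBinom : ℚ) * x ^ (2 * k))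
        + ∑ k ∈ Finset.range (n + 2),
          2 * (2 * (n : ℚ) + 3) * ((n + 1 - k).centralBinom : ℚ) * (k.centralBinom : ℚ) * x ^ (2 * k + 2) := by
    rw [Finset.mul_sum, ← Finset.sum_add_distrib]
    refine Finset.sum_congr rfl fun k hk => ?_
    ring
  rw [key2]
  set S1 := ∑ k ∈ Finset.range (n + 2),
      2 * (2 * (((n + 1 - k : ℕ)) : ℚ) + 1) * ((n + 1 - k).centralBinom : ℚ) * (k.centralBinom : ℚ) * x ^ (2 * k) with hS1
  set S2 := ∑ k ∈ Finset.range (n + 2),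
      2 * (2 * (k : ℚ) + 1) * ((n + 1 - k).centralBinom : ℚ) * (k.centralBinom : ℚ) * x ^ (2 * k + 2) with hS2
  have e1 : ∑ k ∈ Finset.range (n + 2),
        2 * (2 * (n : ℚ) + 3) * ((n + 1 - k).centralBinom : ℚ) * (k.centralBinom : ℚ) * x ^ (2 * k)
      = S1 + ∑ k ∈ Finset.range (n + 1),
          8 * (2 * (k : ℚ) + 1) * ((n - k).centralBinom : ℚ) * (k.centralBinom : ℚ) * x ^ (2 * k + 2) := by
    have step : ∑ k ∈ Finset.range (n + 2),
        2 * (2 * (n : ℚ) + 3) * ((n + 1 - k).centralBinom : ℚ) * (k.centralBinom : ℚ) * x ^ (2 * k)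
        = S1 + ∑ k ∈ Finset.range (n + 2),
            4 * (k : ℚ) * ((n + 1 - k).centralBinom : ℚ) * (k.centralBinom : ℚ) * x ^ (2 * k) := by
      rw [hS1, ← Finset.sum_add_distrib]
      refine Finset.sum_congr rfl fun k hk => ?_
      rw [Finset.mem_range] at hk
      rw [Nat.cast_sub (by omega : k ≤ n + 1)]
      push_cast
      ring
    rw [step]
    congr 1
    rw [Finset.sum_range_succ' (fun k =>
      4 * (k : ℚ) * ((n + 1 - k).centralBinom : ℚ) * (k.centralBinom : ℚ) * x ^ (2 * k))]
    norm_num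
    refine Finset.sum_congr rfl fun k hk => ?_
    rw [Finset.mem_range] at hk
    rw [show n + 1 - (k + 1) = n - k from by omega]
    have := cbq k
    push_cast at this ⊢
    linear_combination (4 * ((n - k).centralBinom : ℚ) * x ^ (2 * k + 2)) * this
  have e2 : ∑ k ∈ Finset.range (n + 2),
        2 * (2 * (n : ℚ) + 3) * ((n + 1 - k).centralBinom : ℚ) * (k.centralBinom : ℚ) * x ^ (2 * k + 2)
      = S2 + ∑ k ∈ Finset.range (n + 1),
          8 * (2 * (((n - k : ℕ)) : ℚ) + 1) * ((n - k).centralBinom : ℚ) * (k.centralBinom : ℚ) * x ^ (2 * k + 2) := by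
    have step : ∑ k ∈ Finset.range (n + 2),
        2 * (2 * (n : ℚ) + 3) * ((n + 1 - k).centralBinom : ℚ) * (k.centralBinom : ℚ) * x ^ (2 * k + 2)
        = S2 + ∑ k ∈ Finset.range (n + 2),
            4 * (((n + 1 - k : ℕ)) : ℚ) * ((n + 1 - k).centralBinom : ℚ) * (k.centralBinom : ℚ) * x ^ (2 * k + 2) := by
      rw [hS2, ← Finset.sum_add_distrib]
      refine Finset.sum_congr rfl fun k hk => ?_
      rw [Finset.mem_range] at hk
      rw [Nat.cast_sub (by omega : k ≤ n + 1)]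
      push_cast
      ring
    rw [step]
    congr 1
    rw [Finset.sum_range_succ]
    rw [show n + 1 - (n + 1) = 0 from by omega]
    norm_num
    refine Finset.sum_congr rfl fun k hk => ?_
    rw [Finset.mem_range] at hk
    rw [show n + 1 - k = (n - k) + 1 from by omega]
    have := cbq (n - k)
    push_cast at this ⊢
    linear_combination (4 * (k.centralBinom : ℚ) * x ^ (2 * k + 2)) * this
  rw [e1, e2]
  have e3 : (∑ k ∈ Finset.range (n + 1),
        8 * (2 * (k : ℚ) + 1) * ((n - k).centralBinom : ℚ) * (k.centralBinom : ℚ) * x ^ (2 * k + 2))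
      + ∑ k ∈ Finset.range (n + 1),
          8 * (2 * (((n - k : ℕ)) : ℚ) + 1) * ((n - k).centralBinom : ℚ) * (k.centralBinom : ℚ) * x ^ (2 * k + 2)
      = 16 * ((n : ℚ) + 1) * x ^ 2 *
          ∑ k ∈ Finset.range (n + 1), ((n - k).centralBinom : ℚ) * (k.centralBinom : ℚ) * x ^ (2 * k) := by
    rw [Finset.mul_sum, ← Finset.sum_add_distrib]
    refine Finset.sum_congr rfl fun k hk => ?_
    rw [Finset.mem_range] at hk
    rw [Nat.cast_sub (by omega : k ≤ n)]
    push_cast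
    ring
  rw [← e3]
  ring

lemma bridge (n : ℕ) (x : ℚ) (hx : x ≠ 0) {L : ℚ}
    (hleval : (2 ^ n * n.factorial : ℚ)⁻¹ *
      ∑ k ∈ Finset.range (n + 1),
        (-1 : ℚ) ^ (k + n) * (n.choose k) * ((2 * k).descFactorial n) *
          ((x + x⁻¹) / 2) ^ (2 * k - n) = L) :
    4 ^ n * x ^ n * L = gg n x := by
  have hy : (x + x⁻¹) / 2 = (x ^ 2 + 1) / (2 * x) := by
    field_simp
  rw [← hleval, hy]
  rw [gg, ← Finset.sum_range_reflect]
  rw [Finset.mul_sum, Finset.mul_sum]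
  refine Finset.sum_congr rfl fun k hk => ?_
  rw [Finset.mem_range] at hk
  have hk' : k ≤ n := by omega
  have hnk : n + 1 - 1 - k = n - k := by omega
  rw [hnk]
  have hsym : (n.choose (n - k) : ℚ) = n.choose k := by
    rw [Nat.choose_symm hk']
  have hsign : ((-1 : ℚ)) ^ (n - k + n) = (-1) ^ k := by
    have : n - k + n = 2 * (n - k) + k := by omega
    rw [this, pow_add, pow_mul]
    norm_num
  rw [hsym, hsign, cc]
  rcases le_or_gt (2 * k) n with h | h
  · -- main case
    obtain ⟨m, rfl⟩ : ∃ m, n = 2 * k + m := ⟨n - 2 * k, by omega⟩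
    have e1 : 2 * (2 * k + m - k) - (2 * k + m) = m := by omega
    have e2 : 2 * k + m - 2 * k = m := by omega
    have e3 : 2 * (2 * k + m - k) = 2 * k + 2 * m := by omega
    rw [e1, e2, e3]
    have edf : ((2 * k + 2 * m).descFactorial (2 * k + m) : ℚ) =
        ((2 * k + m).factorial : ℚ) * ((2 * k + 2 * m).choose (2 * k + m) : ℚ) := by
      rw [Nat.descFactorial_eq_factorial_mul_choose]; push_cast; ring
    rw [edf]
    have hfac : ((2 * k + m).factorial : ℚ) ≠ 0 := by
      exact_mod_cast (2 * k + m).factorial_ne_zero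
    push_cast
    simp only [show (4:ℚ) = 2^2 by norm_num, ← pow_mul]
    rw [div_pow, mul_pow]
    field_simp
    ring
  · -- degenerate case: both sides zero
    have hdf : (2 * (n - k)).descFactorial n = 0 := by
      apply Nat.descFactorial_eq_zero_iff_lt.2; omega
    have hch : (2 * (n - k)).choose n = 0 := Nat.choose_eq_zero_of_lt (by omega)
    rw [hdf, hch]
    simp


lemma fg_zero (x : ℚ) : ff 0 x = gg 0 x := by
  simp [ff, gg, cc, Nat.centralBinom]

lemma fg_one (x : ℚ) : ff 1 x = gg 1 x := by
  simp [ff, gg, cc, Nat.centralBinom, Finset.sum_range_succ]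
  ring

lemma fg (n : ℕ) (x : ℚ) : ff n x = gg n x := by
  induction n using Nat.twoStepInduction with
  | zero => exact fg_zero x
  | one => exact fg_one x
  | more n ih1 ih2 =>
    have h2 : ((n : ℚ) + 2) ≠ 0 := by positivity
    apply mul_left_cancel₀ h2
    rw [Rf n x, Rg n x, ih1, ih2]

theorem stmt17 (n : ℕ) (x : ℚ) (hx : x ≠ 0) :
    ∑ k ∈ Finset.range (n + 1),
      ((2 * n - 2 * k).choose (n - k) * (2 * k).choose k : ℚ) * x ^ (2 * k) =
    4 ^ n * x ^ n * (legendre n).eval ((x + x⁻¹) / 2) := by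
  have hb := bridge n x hx (L := (legendre n).eval ((x + x⁻¹) / 2)) (leval' n _).symm
  have hf : ∑ k ∈ Finset.range (n + 1),
      ((2 * n - 2 * k).choose (n - k) * (2 * k).choose k : ℚ) * x ^ (2 * k) = ff n x := by
    refine Finset.sum_congr rfl fun k hk => ?_
    rw [show 2 * n - 2 * k = 2 * (n - k) from by omega]
    rw [Nat.centralBinom, Nat.centralBinom]
  rw [hf, fg n x, ← hb]
end
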